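/- arXiv:1202.4623 — 9 statements merged into one kernel-verified Lean document; each statement's English description precedes it below -/
import Mathlib

section
/- For every integer n ≥ 1, the sum over all integers j with j ≠ n and j ≠ −n of 1/|n² − j²| is strictly less than 2·log(6n)/n. -/
open Finset Real

private noncomputable def Hs (m : ℕ) : ℝ := ∑ i ∈ Finset.range m, (1:ℝ)/(i+1)

private lemma Hs_mono : Monotone Hs := fun a b h =>
  Finset.sum_le_sum_of_subset_of_nonneg (Finset.range_subset_range.2 h) (fun i _ _ => by positivity)

private lemma Hs_le (m : ℕ) : Hs m ≤ 1 + Real.log m := by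
  have h : (harmonic m : ℝ) = Hs m := by
    unfold Hs harmonic
    push_cast
    simp [one_div]
  linarith [harmonic_le_one_add_log m, h]

private lemma sum_inv_sub (n : ℕ) (hn : 1 ≤ n) :
    ∑ k ∈ Finset.range n, (1:ℝ)/((n:ℝ) - k) = Hs n := by
  rw [Hs, ← Finset.sum_range_reflect (fun j => (1:ℝ)/(j+1)) n]
  refine Finset.sum_congr rfl fun j hj => ?_
  rw [Finset.mem_range] at hj
  have hj' : j ≤ n - 1 := by omega
  rw [Nat.cast_sub hj', Nat.cast_sub hn]
  push_cast
  ring_nf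

private lemma sum_inv_add (n : ℕ) (hn : 1 ≤ n) :
    ∑ k ∈ Finset.range n, (1:ℝ)/((n:ℝ) + k) = Hs (2*n-1) - Hs (n-1) := by
  have h := Finset.sum_range_add (fun i => (1:ℝ)/(i+1)) (n-1) n
  have h2 : (n-1) + n = 2*n - 1 := by omega
  rw [h2] at h
  have h3 : ∀ k ∈ Finset.range n, (1:ℝ)/(((n-1) + k : ℕ) + 1) = 1/((n:ℝ) + k) := by
    intro k _
    congr 1
    push_cast [Nat.cast_sub hn]
    ring
  rw [Finset.sum_congr rfl h3] at h
  rw [show Hs (2*n-1) = _ from h, Hs]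
  ring

private lemma sum_tail (n L : ℕ) (hn : 1 ≤ n) :
    ∑ m ∈ Finset.range L, (1:ℝ)/((m:ℝ) + (2*n+1)) = Hs (2*n + L) - Hs (2*n) := by
  have h := Finset.sum_range_add (fun i => (1:ℝ)/(i+1)) (2*n) L
  have h3 : ∀ k ∈ Finset.range L, (1:ℝ)/((2*n + k : ℕ) + 1) = 1/((k:ℝ) + (2*n+1)) := by
    intro k _
    congr 1
    push_cast
    ring
  rw [Finset.sum_congr rfl h3] at h
  rw [Hs, Hs, show (∑ i ∈ Finset.range (2*n+L), (1:ℝ)/(i+1)) = _ from h]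
  ring

private lemma partC (n : ℕ) (hn : 1 ≤ n) (M : ℕ) :
    ∑ k ∈ Finset.range M, (1:ℝ)/|(n:ℝ)^2 - (k:ℝ)^2| ≤ (2 * Hs (2*n) + 1/(2*n))/(2*n) := by
  have hn0 : (0:ℝ) < n := by exact_mod_cast hn
  set L := max M (n+1) - (n+1) with hL
  have hML : M ≤ (n+1) + L := by omega
  have step1 : ∑ k ∈ Finset.range M, (1:ℝ)/|(n:ℝ)^2 - (k:ℝ)^2|
      ≤ ∑ k ∈ Finset.range ((n+1)+L), (1:ℝ)/|(n:ℝ)^2 - (k:ℝ)^2| :=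
    Finset.sum_le_sum_of_subset_of_nonneg (Finset.range_subset_range.2 hML)
      (fun i _ _ => by positivity)
  rw [Finset.sum_range_add] at step1
  -- Part 1
  have part1 : ∑ k ∈ Finset.range (n+1), (1:ℝ)/|(n:ℝ)^2 - (k:ℝ)^2|
      = (Hs (2*n) + 1/(2*n))/(2*n) := by
    rw [Finset.sum_range_succ]
    have hz : (1:ℝ)/|(n:ℝ)^2 - (n:ℝ)^2| = 0 := by simp
    rw [hz, add_zero]
    have hterm : ∀ k ∈ Finset.range n, (1:ℝ)/|(n:ℝ)^2 - (k:ℝ)^2|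
        = (1/((n:ℝ) - k) + 1/((n:ℝ) + k))/(2*n) := by
      intro k hk
      rw [Finset.mem_range] at hk
      have hk' : (k:ℝ) < n := by exact_mod_cast hk
      have hk0 : (0:ℝ) ≤ k := by positivity
      have h1 : (0:ℝ) < (n:ℝ) - k := by linarith
      have h2 : (0:ℝ) < (n:ℝ) + k := by linarith
      rw [abs_of_pos (by nlinarith), div_add_div _ _ (ne_of_gt h1) (ne_of_gt h2), div_div,
        div_eq_div_iff (by nlinarith) (by positivity)]
      ring
    rw [Finset.sum_congr rfl hterm, ← Finset.sum_div, Finset.sum_add_distrib,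
      sum_inv_sub n hn, sum_inv_add n hn]
    have e1 : Hs n = Hs (n-1) + 1/n := by
      have h := Finset.sum_range_succ (fun i => (1:ℝ)/(i+1)) (n-1)
      have h2 : (n-1) + 1 = n := by omega
      rw [h2] at h
      rw [Hs, h, Hs]
      congr 1
      rw [Nat.cast_sub hn]
      push_cast
      ring
    have e2 : Hs (2*n) = Hs (2*n-1) + 1/(2*n) := by
      have h := Finset.sum_range_succ (fun i => (1:ℝ)/(i+1)) (2*n-1)
      have h2 : (2*n-1) + 1 = 2*n := by omega
      rw [h2] at h
      rw [Hs, h, Hs]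
      congr 1
      rw [Nat.cast_sub (by omega : 1 ≤ 2*n)]
      push_cast
      ring
    rw [e1, e2]
    push_cast
    ring
  -- Part 2
  have part2 : ∑ m ∈ Finset.range L, (1:ℝ)/|(n:ℝ)^2 - (((n+1)+m : ℕ):ℝ)^2|
      ≤ Hs (2*n)/(2*n) := by
    have hterm : ∀ m ∈ Finset.range L, (1:ℝ)/|(n:ℝ)^2 - (((n+1)+m : ℕ):ℝ)^2|
        = (1/((m:ℝ)+1) - 1/((m:ℝ) + (2*n+1)))/(2*n) := by
      intro m _
      have hm0 : (0:ℝ) ≤ m := by positivity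
      have habs : |(n:ℝ)^2 - (((n+1)+m : ℕ):ℝ)^2| = (((n+1)+m : ℕ):ℝ)^2 - (n:ℝ)^2 := by
        rw [abs_sub_comm, abs_of_pos]
        push_cast
        nlinarith
      have h1 : (0:ℝ) < (m:ℝ) + 1 := by linarith
      have h2 : (0:ℝ) < (m:ℝ) + (2*n+1) := by positivity
      rw [habs, div_sub_div _ _ (ne_of_gt h1) (ne_of_gt h2), div_div]
      push_cast
      rw [div_eq_div_iff (by nlinarith) (by positivity)]
      ring
    rw [Finset.sum_congr rfl hterm, ← Finset.sum_div, Finset.sum_sub_distrib]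
    have hA : ∑ m ∈ Finset.range L, (1:ℝ)/((m:ℝ)+1) = Hs L := by
      rw [Hs]
    rw [hA, sum_tail n L hn]
    have hmono : Hs L ≤ Hs (2*n + L) := Hs_mono (by omega)
    have h2n : (0:ℝ) < 2*n := by positivity
    rw [div_le_div_iff₀ h2n h2n]
    nlinarith
  calc ∑ k ∈ Finset.range M, (1:ℝ)/|(n:ℝ)^2 - (k:ℝ)^2|
      ≤ _ := step1
    _ ≤ (Hs (2*n) + 1/(2*n))/(2*n) + Hs (2*n)/(2*n) := by
        rw [part1]; exact add_le_add_right part2 _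
    _ = (2 * Hs (2*n) + 1/(2*n))/(2*n) := by ring

set_option maxHeartbeats 1000000 in
/-- For every integer `n ≥ 1`, the sum over all integers `j ≠ ±n` of `1/|n² - j²|`
is strictly less than `2 log(6n) / n`. -/
theorem mathieu_stmt_0 (n : ℕ) (hn : 1 ≤ n) :
    Summable (fun j : {j : ℤ // j ≠ (n : ℤ) ∧ j ≠ -(n : ℤ)} =>
      1 / |(n : ℝ) ^ 2 - ((j : ℤ) : ℝ) ^ 2|) ∧
    ∑' j : {j : ℤ // j ≠ (n : ℤ) ∧ j ≠ -(n : ℤ)}, 1 / |(n : ℝ) ^ 2 - ((j : ℤ) : ℝ) ^ 2|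
      < 2 * Real.log (6 * n) / n := by
  have hn0 : (0:ℝ) < n := by exact_mod_cast hn
  set g : ℤ → ℝ := fun j => 1 / |(n:ℝ)^2 - (j:ℝ)^2| with hg
  set B : ℝ := (2 * Hs (2*n) + 1/(2*n))/(2*n) with hB
  have hgnonneg : ∀ j : ℤ, 0 ≤ g j := fun j => by positivity
  have hCsum : ∀ M : ℕ, ∑ k ∈ Finset.range M, g (k:ℤ) ≤ B := by
    intro M
    have : ∀ k ∈ Finset.range M, g (k:ℤ) = 1/|(n:ℝ)^2 - (k:ℝ)^2| := by
      intro k _; simp [hg]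
    rw [Finset.sum_congr rfl this]
    exact partC n hn M
  have hSnat : Summable (fun k : ℕ => g (k:ℤ)) :=
    summable_of_sum_range_le (fun k => hgnonneg _) hCsum
  have heven : ∀ j : ℤ, g (-j) = g j := by
    intro j; simp [hg]
  have hsucc : (fun k : ℕ => g ((k:ℤ)+1)) = fun k : ℕ => g (((k+1 : ℕ):ℤ)) := by
    funext k; push_cast; ring_nf
  have hSsucc : Summable (fun k : ℕ => g ((k:ℤ)+1)) := by
    rw [hsucc]
    exact (summable_nat_add_iff 1).2 hSnat
  have hSneg : Summable (fun k : ℕ => g (-((k:ℤ)+1))) := by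
    have : (fun k : ℕ => g (-((k:ℤ)+1))) = fun k : ℕ => g ((k:ℤ)+1) := by
      funext k; rw [heven]
    rw [this]; exact hSsucc
  have hSZ : Summable g := hSnat.of_nat_of_neg_add_one hSneg
  constructor
  · exact hSZ.subtype _
  -- tsum over the subtype equals tsum over ℤ
  have hsupp : Function.support g ⊆ {j : ℤ | j ≠ (n:ℤ) ∧ j ≠ -(n:ℤ)} := by
    intro j hj
    simp only [Set.mem_setOf_eq]
    constructor
    · rintro rfl; apply hj; simp [hg]
    · rintro rfl; apply hj; simp [hg]
  have hts : ∑' j : {j : ℤ // j ≠ (n : ℤ) ∧ j ≠ -(n : ℤ)}, 1 / |(n : ℝ) ^ 2 - ((j : ℤ) : ℝ) ^ 2|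
      = ∑' j : ℤ, g j := tsum_subtype_eq_of_support_subset hsupp
  rw [hts]
  -- compute the ℤ tsum in terms of the ℕ tsum
  have hZsplit : ∑' j : ℤ, g j = (∑' k : ℕ, g (k:ℤ)) + ∑' k : ℕ, g (-((k:ℤ)+1)) := by
    exact_mod_cast tsum_of_nat_of_neg_add_one hSnat hSneg
  have hnegeq : ∑' k : ℕ, g (-((k:ℤ)+1)) = ∑' k : ℕ, g ((k:ℤ)+1) := by
    congr 1; funext k; rw [heven]
  have hzerosplit : ∑' k : ℕ, g (k:ℤ) = g 0 + ∑' k : ℕ, g ((k:ℤ)+1) := by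
    rw [Summable.tsum_eq_zero_add hSnat, hsucc]
    norm_num
  have hNle : ∑' k : ℕ, g (k:ℤ) ≤ B :=
    Real.tsum_le_of_sum_range_le (fun k => hgnonneg _) hCsum
  have hg0 : g 0 = 1/(n:ℝ)^2 := by
    simp [hg, abs_of_pos (by positivity : (0:ℝ) < (n:ℝ)^2)]
  have hkey : ∑' j : ℤ, g j ≤ 2*B - 1/(n:ℝ)^2 := by
    rw [hZsplit, hnegeq]
    have : ∑' k : ℕ, g ((k:ℤ)+1) = (∑' k : ℕ, g (k:ℤ)) - g 0 := by
      rw [hzerosplit]; ring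
    rw [this, ← hg0]
    linarith
  refine hkey.trans_lt ?_
  -- final numeric estimate
  have hH : Hs (2*n) ≤ 1 + Real.log (2*(n:ℝ)) := by
    have := Hs_le (2*n)
    push_cast at this
    exact this
  have hlog3 : 1 < Real.log 3 := by
    rw [Real.lt_log_iff_exp_lt (by norm_num)]
    calc Real.exp 1 < 2.7182818286 := Real.exp_one_lt_d9
      _ < 3 := by norm_num
  have hsplit6 : Real.log (6*(n:ℝ)) = Real.log 3 + Real.log (2*(n:ℝ)) := by
    rw [← Real.log_mul (by norm_num) (by positivity)]
    ring_nf
  have h1 : 2 * Hs (2*n) - 1/(2*(n:ℝ)) < 2 * Real.log (6*(n:ℝ)) := by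
    rw [hsplit6]
    have h2 : (0:ℝ) < 1/(2*(n:ℝ)) := by positivity
    linarith
  have e : 2*B - 1/(n:ℝ)^2 = (2*Hs (2*n) - 1/(2*(n:ℝ)))/(n:ℝ) := by
    rw [hB]
    field_simp
    ring
  rw [e, div_lt_div_iff₀ hn0 hn0]
  nlinarith
end

section
/- For every integer n ≥ 2, every integer ν ≥ 1, and every z ∈ ℂ with |z| ≤ 1, the sum over all ν-tuples (j₁,…,j_ν) ∈ (ℤ ∖ {n, −n})^ν of ∏_{s=1}^ν 1/|n² − j_s² + z| is strictly less than (4·log(6n)/n)^ν. -/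
set_option maxHeartbeats 1000000 in
private lemma tuple_hasSum {ι : Type*} (f : ι → ℝ) (h0 : ∀ i, 0 ≤ f i) (hf : Summable f) :
    ∀ ν : ℕ, HasSum (fun j : Fin ν → ι => ∏ s, f (j s)) ((∑' i, f i) ^ ν) := by
  intro ν
  induction ν with
  | zero =>
    have h1 : (fun j : Fin 0 → ι => ∏ s, f (j s)) = fun _ => (1:ℝ) := by
      funext j; simp
    rw [h1, pow_zero]
    have := hasSum_single (f := fun _ : Fin 0 → ι => (1:ℝ)) (fun i => i.elim0)
      (fun b' hb' => absurd (Subsingleton.elim b' _) hb')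
    simpa using this
  | succ ν ih =>
    have hF0 : ∀ p : Fin ν → ι, 0 ≤ ∏ s, f (p s) :=
      fun p => Finset.prod_nonneg (fun s _ => h0 (p s))
    have h1 : Summable fun i => ‖f i‖ := by
      have : (fun i => ‖f i‖) = f := funext fun i => Real.norm_of_nonneg (h0 i)
      rw [this]; exact hf
    have h2 : Summable fun p : Fin ν → ι => ‖∏ s, f (p s)‖ := by
      have : (fun p : Fin ν → ι => ‖∏ s, f (p s)‖) = fun p => ∏ s, f (p s) :=
        funext fun p => Real.norm_of_nonneg (hF0 p)
      rw [this]; exact ih.summable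
    have hnorm : Summable fun x : ι × (Fin ν → ι) => f x.1 * ∏ s, f (x.2 s) :=
      summable_mul_of_summable_norm (R := ℝ)
        (f := f) (g := fun p : Fin ν → ι => ∏ s, f (p s)) h1 h2
    have key := HasSum.mul (f := f) (g := fun p : Fin ν → ι => ∏ s, f (p s))
        hf.hasSum ih hnorm
    rw [pow_succ, mul_comm]
    refine (Equiv.hasSum_iff (Fin.consEquiv (fun _ : Fin (ν+1) => ι))).mp ?_
    have he : ((fun j : Fin (ν+1) → ι => ∏ s, f (j s)) ∘ (Fin.consEquiv (fun _ : Fin (ν+1) => ι)))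
        = fun p => f p.1 * ∏ s, f (p.2 s) := by
      funext p
      show (∏ s : Fin (ν+1), f ((Fin.consEquiv fun _ => ι) p s)) = _
      rw [Fin.prod_univ_succ]
      simp
    rw [he]
    exact key

private noncomputable def Pa (a b : ℤ) : ℝ := ∑ k ∈ Finset.Ioc a b, (1:ℝ)/(k:ℝ)

private lemma Pa_nonneg {a b : ℤ} (ha : 0 ≤ a) : 0 ≤ Pa a b := by
  apply Finset.sum_nonneg
  intro k hk
  rw [Finset.mem_Ioc] at hk
  have : (0:ℝ) < (k:ℝ) := by exact_mod_cast lt_of_le_of_lt ha hk.1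
  positivity

private lemma Pa_split {a b c : ℤ} (hab : a ≤ b) (hbc : b ≤ c) :
    Pa a b + Pa b c = Pa a c := by
  have hd : Disjoint (Finset.Ioc a b) (Finset.Ioc b c) := by
    rw [Finset.disjoint_left]
    intro x hx hx'
    simp only [Finset.mem_Ioc] at hx hx'
    omega
  rw [Pa, Pa, Pa, ← Finset.sum_union hd, Finset.Ioc_union_Ioc_eq_Ioc hab hbc]

private lemma Pa_mono {a b c : ℤ} (ha : 0 ≤ a) (hbc : b ≤ c) : Pa a b ≤ Pa a c := by
  apply Finset.sum_le_sum_of_subset_of_nonneg (Finset.Ioc_subset_Ioc_right hbc)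
  intro k hk _
  rw [Finset.mem_Ioc] at hk
  have : (0:ℝ) < (k:ℝ) := by exact_mod_cast lt_of_le_of_lt ha hk.1
  positivity

private lemma Pa_single {b : ℤ} : Pa (b-1) b = 1/(b:ℝ) := by
  have h : Finset.Ioc (b-1) b = {b} := by ext x; simp [Finset.mem_Ioc]; omega
  rw [Pa, h, Finset.sum_singleton]

private lemma Pa_harmonic (m : ℕ) : Pa 0 (m:ℤ) = (harmonic m : ℝ) := by
  rw [Pa, harmonic]
  push_cast
  refine Finset.sum_nbij' (fun k : ℤ => (k-1).toNat) (fun i : ℕ => (i:ℤ)+1) ?_ ?_ ?_ ?_ ?_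
  · intro a ha; simp only [Finset.mem_Ioc] at ha; simp only [Finset.mem_range]; omega
  · intro a ha; simp only [Finset.mem_range] at ha; simp only [Finset.mem_Ioc]; omega
  · intro a ha; simp only [Finset.mem_Ioc] at ha; omega
  · intro a ha; simp only [Finset.mem_range] at ha; omega
  · intro a ha
    simp only [Finset.mem_Ioc] at ha
    have : ((a - 1).toNat : ℝ) + 1 = (a : ℝ) := by
      have : ((a - 1).toNat : ℤ) = a - 1 := by omega
      have := congrArg (fun x : ℤ => (x : ℝ)) this
      push_cast at this ⊢
      linarith
    rw [this, one_div]

private lemma two_le_abs (n : ℕ) (hn : 2 ≤ n) (j : ℤ) (h1 : j ≠ (n:ℤ)) (h2 : j ≠ -(n:ℤ)) :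
    (2:ℝ) ≤ |(n:ℝ)^2 - (j:ℝ)^2| := by
  have key : (2:ℤ) ≤ |(n:ℤ)^2 - j^2| := by
    have hsq : ((j.natAbs : ℤ))^2 = j^2 := Int.natAbs_sq j
    rcases (by omega : j.natAbs + 1 ≤ n ∨ n + 1 ≤ j.natAbs) with h | h
    · have h' : (j.natAbs : ℤ) + 1 ≤ (n:ℤ) := by exact_mod_cast h
      have h0 : (0:ℤ) ≤ (j.natAbs : ℤ) := Int.natCast_nonneg _
      have h2n : (2:ℤ) ≤ (n:ℤ) := by exact_mod_cast hn
      have hpos : (0:ℤ) ≤ (n:ℤ)^2 - j^2 := by nlinarith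
      rw [abs_of_nonneg hpos]
      nlinarith
    · have h' : (n:ℤ) + 1 ≤ (j.natAbs : ℤ) := by exact_mod_cast h
      have h2n : (2:ℤ) ≤ (n:ℤ) := by exact_mod_cast hn
      have hneg : (n:ℤ)^2 - j^2 ≤ 0 := by nlinarith
      rw [abs_of_nonpos hneg]
      nlinarith
  have : ((2:ℤ):ℝ) ≤ (|(n:ℤ)^2 - j^2| : ℝ) := by exact_mod_cast key
  push_cast at this
  convert this using 2 <;> push_cast <;> ring

private lemma pointwise_bound (n : ℕ) (hn : 2 ≤ n) (z : ℂ) (hz : ‖z‖ ≤ 1)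
    (j : ℤ) (h1 : j ≠ (n:ℤ)) (h2 : j ≠ -(n:ℤ)) :
    1/‖(n:ℂ)^2 - (j:ℂ)^2 + z‖ ≤ 2 * (1/|(n:ℝ)^2 - (j:ℝ)^2|) := by
  set a : ℝ := (n:ℝ)^2 - (j:ℝ)^2 with ha
  have h2a : (2:ℝ) ≤ |a| := two_le_abs n hn j h1 h2
  have hcast : (n:ℂ)^2 - (j:ℂ)^2 = ((a:ℝ):ℂ) := by rw [ha]; push_cast; ring
  have hnormw : ‖(n:ℂ)^2 - (j:ℂ)^2‖ = |a| := by
    rw [hcast, Complex.norm_real, Real.norm_eq_abs]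
  have hlow : |a|/2 ≤ ‖(n:ℂ)^2 - (j:ℂ)^2 + z‖ := by
    have h := norm_sub_norm_le ((n:ℂ)^2 - (j:ℂ)^2) (-z)
    rw [sub_neg_eq_add, norm_neg, hnormw] at h
    linarith
  have hpos : (0:ℝ) < |a|/2 := by linarith
  calc 1/‖(n:ℂ)^2 - (j:ℂ)^2 + z‖ ≤ 1/(|a|/2) := by
        apply one_div_le_one_div_of_le hpos hlow
    _ = 2 * (1/|a|) := by rw [one_div_div]; ring

open Finset in
private lemma finsum_bound (n : ℕ) (hn : 2 ≤ n) (G : Finset ℤ)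
    (hG : ∀ j ∈ G, j ≠ (n:ℤ) ∧ j ≠ -(n:ℤ)) :
    ∑ j ∈ G, 1/|(n:ℝ)^2 - (j:ℝ)^2|
      ≤ 1/(n:ℝ)^2 + (1/(n:ℝ)) * (Pa 0 ((n:ℤ)-1) + Pa (n:ℤ) (2*(n:ℤ)-1) + Pa 0 (2*(n:ℤ))) := by
  have hn2 : (2:ℤ) ≤ (n:ℤ) := by exact_mod_cast hn
  have hnR : (2:ℝ) ≤ (n:ℝ) := by exact_mod_cast hn
  have hnR0 : (0:ℝ) < (n:ℝ) := by linarith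
  set q : ℤ → ℝ := fun j => 1/|(n:ℝ)^2 - (j:ℝ)^2| with hqdef
  have hq0 : ∀ j, 0 ≤ q j := fun j => by
    simp only [hqdef]; positivity
  have hqneg : ∀ j : ℤ, q (-j) = q j := fun j => by
    simp only [hqdef]; push_cast; rw [neg_sq]
  set M : ℤ := (n:ℤ) + 1 + ∑ j ∈ G, |j| with hMdef
  have habs_nonneg : (0:ℤ) ≤ ∑ j ∈ G, |j| := Finset.sum_nonneg fun i _ => abs_nonneg i
  have hM : (n:ℤ) + 1 ≤ M := by omega
  have hjM : ∀ j ∈ G, |j| ≤ M := by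
    intro j hj
    have h1 : |j| ≤ ∑ i ∈ G, |i| :=
      Finset.single_le_sum (f := fun i : ℤ => |i|) (fun i _ => abs_nonneg i) hj
    omega
  set T : Finset ℤ := ((Finset.Icc (-M) M).erase ((n:ℤ))).erase (-(n:ℤ)) with hTdef
  have hGT : G ⊆ T := by
    intro j hj
    obtain ⟨e1, e2⟩ := hG j hj
    have habsj := abs_le.mp (hjM j hj)
    simp only [hTdef, Finset.mem_erase, Finset.mem_Icc]
    exact ⟨e2, e1, habsj.1, habsj.2⟩
  have step1 : ∑ j ∈ G, q j ≤ ∑ j ∈ T, q j :=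
    Finset.sum_le_sum_of_subset_of_nonneg hGT (fun i _ _ => hq0 i)
  set S1 : Finset ℤ := Finset.Ioc (-M-1) (-(n:ℤ)-1) with hS1def
  set S2 : Finset ℤ := Finset.Ioc (-(n:ℤ)) (-1) with hS2def
  set S4 : Finset ℤ := Finset.Ioc 0 ((n:ℤ)-1) with hS4def
  set S5 : Finset ℤ := Finset.Ioc (n:ℤ) M with hS5def
  have hT : T = ((S1 ∪ S2) ∪ {(0:ℤ)}) ∪ (S4 ∪ S5) := by
    ext x
    simp only [hTdef, hS1def, hS2def, hS4def, hS5def, Finset.mem_erase, Finset.mem_Icc,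
      Finset.mem_union, Finset.mem_Ioc, Finset.mem_singleton]
    omega
  have hd1 : Disjoint S1 S2 := by
    rw [Finset.disjoint_left]; intro x hx hx'
    simp only [hS1def, hS2def, Finset.mem_Ioc] at hx hx'; omega
  have hd2 : Disjoint (S1 ∪ S2) ({(0:ℤ)} : Finset ℤ) := by
    rw [Finset.disjoint_left]; intro x hx hx'
    simp only [hS1def, hS2def, Finset.mem_union, Finset.mem_Ioc] at hx
    simp only [Finset.mem_singleton] at hx'; omega
  have hd3 : Disjoint S4 S5 := by
    rw [Finset.disjoint_left]; intro x hx hx'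
    simp only [hS4def, hS5def, Finset.mem_Ioc] at hx hx'; omega
  have hd4 : Disjoint ((S1 ∪ S2) ∪ {(0:ℤ)}) (S4 ∪ S5) := by
    rw [Finset.disjoint_left]; intro x hx hx'
    simp only [hS1def, hS2def, Finset.mem_union, Finset.mem_Ioc, Finset.mem_singleton] at hx
    simp only [hS4def, hS5def, Finset.mem_union, Finset.mem_Ioc] at hx'; omega
  have hsplit : ∑ j ∈ T, q j = (((∑ j ∈ S1, q j) + ∑ j ∈ S2, q j) + q 0) + ((∑ j ∈ S4, q j) + ∑ j ∈ S5, q j) := by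
    rw [hT, Finset.sum_union hd4, Finset.sum_union hd2, Finset.sum_union hd1,
      Finset.sum_union hd3, Finset.sum_singleton]
  -- reindex negatives
  have hS1S5 : ∑ j ∈ S1, q j = ∑ j ∈ S5, q j := by
    refine Finset.sum_nbij' (fun j => -j) (fun k => -k) ?_ ?_ ?_ ?_ ?_
    · intro a ha; simp only [hS1def, Finset.mem_Ioc] at ha
      simp only [hS5def, Finset.mem_Ioc]; omega
    · intro a ha; simp only [hS5def, Finset.mem_Ioc] at ha
      simp only [hS1def, Finset.mem_Ioc]; omega
    · intro a _; simp
    · intro a _; simp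
    · intro a _; exact (hqneg a).symm
  have hS2S4 : ∑ j ∈ S2, q j = ∑ j ∈ S4, q j := by
    refine Finset.sum_nbij' (fun j => -j) (fun k => -k) ?_ ?_ ?_ ?_ ?_
    · intro a ha; simp only [hS2def, Finset.mem_Ioc] at ha
      simp only [hS4def, Finset.mem_Ioc]; omega
    · intro a ha; simp only [hS4def, Finset.mem_Ioc] at ha
      simp only [hS2def, Finset.mem_Ioc]; omega
    · intro a _; simp
    · intro a _; simp
    · intro a _; exact (hqneg a).symm
  set c : ℝ := 1/(2*(n:ℝ)) with hcdef
  have hc0 : 0 ≤ c := by positivity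
  -- piece A
  have hA : ∑ j ∈ S4, q j = c * (Pa 0 ((n:ℤ)-1) + Pa (n:ℤ) (2*(n:ℤ)-1)) := by
    have hcong : ∀ j ∈ S4, q j = c * (1/((n:ℝ)-(j:ℝ)) + 1/((n:ℝ)+(j:ℝ))) := by
      intro j hj
      simp only [hS4def, Finset.mem_Ioc] at hj
      have hj1 : (1:ℝ) ≤ (j:ℝ) := by exact_mod_cast hj.1
      have hj2 : (j:ℝ) ≤ (n:ℝ) - 1 := by
        have : (j:ℝ) ≤ ((n:ℤ):ℝ) - 1 := by exact_mod_cast hj.2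
        simpa using this
      have hd1' : (0:ℝ) < (n:ℝ) - (j:ℝ) := by linarith
      have hd2' : (0:ℝ) < (n:ℝ) + (j:ℝ) := by linarith
      have hfac : (n:ℝ)^2 - (j:ℝ)^2 = ((n:ℝ)-(j:ℝ))*((n:ℝ)+(j:ℝ)) := by ring
      simp only [hqdef, hcdef]
      rw [hfac, abs_of_pos (mul_pos hd1' hd2')]
      field_simp
      ring
    rw [Finset.sum_congr rfl hcong, ← Finset.mul_sum, Finset.sum_add_distrib]
    congr 1
    congr 1
    · refine Finset.sum_nbij' (fun j => (n:ℤ) - j) (fun k => (n:ℤ) - k) ?_ ?_ ?_ ?_ ?_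
      · intro a ha; simp only [hS4def, Finset.mem_Ioc] at ha
        simp only [Finset.mem_Ioc]; omega
      · intro a ha; simp only [Finset.mem_Ioc] at ha
        simp only [hS4def, Finset.mem_Ioc]; omega
      · intro a _; omega
      · intro a _; omega
      · intro a _; push_cast; ring_nf
    · refine Finset.sum_nbij' (fun j => (n:ℤ) + j) (fun k => k - (n:ℤ)) ?_ ?_ ?_ ?_ ?_
      · intro a ha; simp only [hS4def, Finset.mem_Ioc] at ha
        simp only [Finset.mem_Ioc]; omega
      · intro a ha; simp only [Finset.mem_Ioc] at ha
        simp only [hS4def, Finset.mem_Ioc]; omega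
      · intro a _; omega
      · intro a _; omega
      · intro a _; push_cast; ring_nf
  -- piece B
  have hB : ∑ j ∈ S5, q j ≤ c * Pa 0 (2*(n:ℤ)) := by
    have hcong : ∀ j ∈ S5, q j = c * (1/((j:ℝ)-(n:ℝ)) - 1/((j:ℝ)+(n:ℝ))) := by
      intro j hj
      simp only [hS5def, Finset.mem_Ioc] at hj
      have hj1 : (n:ℝ) + 1 ≤ (j:ℝ) := by exact_mod_cast hj.1
      have hd1' : (0:ℝ) < (j:ℝ) - (n:ℝ) := by linarith
      have hd2' : (0:ℝ) < (j:ℝ) + (n:ℝ) := by linarith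
      have hfac : (n:ℝ)^2 - (j:ℝ)^2 = -(((j:ℝ)-(n:ℝ))*((j:ℝ)+(n:ℝ))) := by ring
      simp only [hqdef, hcdef]
      rw [hfac, abs_neg, abs_of_pos (mul_pos hd1' hd2')]
      field_simp
      ring
    rw [Finset.sum_congr rfl hcong, ← Finset.mul_sum, Finset.sum_sub_distrib]
    have e1 : ∑ j ∈ S5, 1/((j:ℝ)-(n:ℝ)) = Pa 0 (M - (n:ℤ)) := by
      refine Finset.sum_nbij' (fun j => j - (n:ℤ)) (fun k => k + (n:ℤ)) ?_ ?_ ?_ ?_ ?_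
      · intro a ha; simp only [hS5def, Finset.mem_Ioc] at ha
        simp only [Finset.mem_Ioc]; omega
      · intro a ha; simp only [Finset.mem_Ioc] at ha
        simp only [hS5def, Finset.mem_Ioc]; omega
      · intro a _; omega
      · intro a _; omega
      · intro a _; push_cast; ring_nf
    have e2 : ∑ j ∈ S5, 1/((j:ℝ)+(n:ℝ)) = Pa (2*(n:ℤ)) (M + (n:ℤ)) := by
      refine Finset.sum_nbij' (fun j => j + (n:ℤ)) (fun k => k - (n:ℤ)) ?_ ?_ ?_ ?_ ?_
      · intro a ha; simp only [hS5def, Finset.mem_Ioc] at ha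
        simp only [Finset.mem_Ioc]; omega
      · intro a ha; simp only [Finset.mem_Ioc] at ha
        simp only [hS5def, Finset.mem_Ioc]; omega
      · intro a _; omega
      · intro a _; omega
      · intro a _; push_cast; ring_nf
    rw [e1, e2]
    have hkey : Pa 0 (M - (n:ℤ)) - Pa (2*(n:ℤ)) (M + (n:ℤ)) ≤ Pa 0 (2*(n:ℤ)) := by
      rcases le_or_gt (M - (n:ℤ)) (2*(n:ℤ)) with h | h
      · have h1 := Pa_mono (a := 0) le_rfl h
        have h2 : 0 ≤ Pa (2*(n:ℤ)) (M + (n:ℤ)) := Pa_nonneg (by omega)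
        linarith
      · have h1 := Pa_split (a := 0) (b := 2*(n:ℤ)) (c := M - (n:ℤ)) (by omega) (le_of_lt h)
        have h2 := Pa_mono (a := 2*(n:ℤ)) (b := M - (n:ℤ)) (c := M + (n:ℤ)) (by omega) (by omega)
        linarith
    exact mul_le_mul_of_nonneg_left hkey hc0
  have hq00 : q 0 = 1/(n:ℝ)^2 := by
    simp only [hqdef]
    norm_num
  have h2c : 2 * c = 1/(n:ℝ) := by
    rw [hcdef]; field_simp
  calc ∑ j ∈ G, q j ≤ ∑ j ∈ T, q j := step1
    _ = (((∑ j ∈ S1, q j) + ∑ j ∈ S2, q j) + q 0) + ((∑ j ∈ S4, q j) + ∑ j ∈ S5, q j) := hsplit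
    _ = q 0 + 2 * (∑ j ∈ S4, q j) + 2 * (∑ j ∈ S5, q j) := by
        rw [hS1S5, hS2S4]; ring
    _ ≤ q 0 + 2 * (c * (Pa 0 ((n:ℤ)-1) + Pa (n:ℤ) (2*(n:ℤ)-1))) + 2 * (c * Pa 0 (2*(n:ℤ))) := by
        rw [hA]
        have := mul_le_mul_of_nonneg_left hB (by norm_num : (0:ℝ) ≤ 2)
        linarith
    _ = q 0 + (2*c) * (Pa 0 ((n:ℤ)-1) + Pa (n:ℤ) (2*(n:ℤ)-1) + Pa 0 (2*(n:ℤ))) := by ring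
    _ = 1/(n:ℝ)^2 + (1/(n:ℝ)) * (Pa 0 ((n:ℤ)-1) + Pa (n:ℤ) (2*(n:ℤ)-1) + Pa 0 (2*(n:ℤ))) := by
        rw [hq00, h2c]
private lemma const_bound (n : ℕ) (hn : 2 ≤ n) :
    1/(n:ℝ)^2 + (1/(n:ℝ)) * (Pa 0 ((n:ℤ)-1) + Pa (n:ℤ) (2*(n:ℤ)-1) + Pa 0 (2*(n:ℤ)))
      < 2 * Real.log (6*(n:ℝ)) / (n:ℝ) := by
  have hnR : (2:ℝ) ≤ (n:ℝ) := by exact_mod_cast hn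
  have hn0 : (0:ℝ) < (n:ℝ) := by linarith
  set X : ℝ := Pa 0 (2*(n:ℤ)-1) with hXdef
  have hrec1 : X + Pa (2*(n:ℤ)-1) (2*(n:ℤ)) = Pa 0 (2*(n:ℤ)) :=
    Pa_split (by omega) (by omega)
  have hsingle1 : Pa (2*(n:ℤ)-1) (2*(n:ℤ)) = 1/(2*(n:ℝ)) := by
    have := Pa_single (b := 2*(n:ℤ))
    rw [this]
    push_cast
    ring_nf
  have hrec2 : Pa 0 (n:ℤ) + Pa (n:ℤ) (2*(n:ℤ)-1) = X := Pa_split (by omega) (by omega)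
  have hrec3 : Pa 0 ((n:ℤ)-1) + Pa ((n:ℤ)-1) (n:ℤ) = Pa 0 (n:ℤ) := Pa_split (by omega) (by omega)
  have hsingle2 : Pa ((n:ℤ)-1) (n:ℤ) = 1/(n:ℝ) := Pa_single
  -- rewrite LHS
  have hE : 1/(n:ℝ)^2 + (1/(n:ℝ)) * (Pa 0 ((n:ℤ)-1) + Pa (n:ℤ) (2*(n:ℤ)-1) + Pa 0 (2*(n:ℤ)))
      = (2*X + 1/(2*(n:ℝ)) ) / (n:ℝ) := by
    have e1 : Pa 0 (2*(n:ℤ)) = X + 1/(2*(n:ℝ)) := by rw [← hrec1, hsingle1]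
    have e2 : Pa (n:ℤ) (2*(n:ℤ)-1) = X - Pa 0 (n:ℤ) := by linarith
    have e3 : Pa 0 ((n:ℤ)-1) = Pa 0 (n:ℤ) - 1/(n:ℝ) := by
      rw [← hrec3, hsingle2]; ring
    rw [e1, e2, e3]
    field_simp
    ring
  rw [hE, div_lt_div_iff_of_pos_right hn0]
  have hX : X = (harmonic (2*n-1) : ℝ) := by
    have h := Pa_harmonic (2*n-1)
    have : ((2*n-1 : ℕ) : ℤ) = 2*(n:ℤ)-1 := by omega
    rw [this] at h
    exact h
  have hharm : (harmonic (2*n-1) : ℝ) ≤ 1 + Real.log (2*(n:ℝ)-1) := by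
    have h := harmonic_le_one_add_log (2*n-1)
    have hc : ((2*n-1 : ℕ) : ℝ) = 2*(n:ℝ)-1 := by
      have : (1:ℕ) ≤ 2*n := by omega
      push_cast [this]
      ring
    rwa [hc] at h
  have h2n0 : (0:ℝ) < 2*(n:ℝ) := by linarith
  have h2n1 : (0:ℝ) < 2*(n:ℝ)-1 := by linarith
  have hlog1 : Real.log (2*(n:ℝ)-1) ≤ Real.log (2*(n:ℝ)) - 1/(2*(n:ℝ)) := by
    have hx : (0:ℝ) < (2*(n:ℝ)-1)/(2*(n:ℝ)) := by positivity
    have h1 := Real.log_le_sub_one_of_pos hx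
    rw [Real.log_div (by linarith) (by linarith)] at h1
    have : (2*(n:ℝ)-1)/(2*(n:ℝ)) - 1 = -(1/(2*(n:ℝ))) := by field_simp; ring
    rw [this] at h1
    linarith
  have hlog2 : Real.log (6*(n:ℝ)) = Real.log 3 + Real.log (2*(n:ℝ)) := by
    rw [show (6:ℝ)*(n:ℝ) = 3 * (2*(n:ℝ)) by ring, Real.log_mul (by norm_num) (by linarith)]
  have hlog3 : (1:ℝ) < Real.log 3 := by
    have h1 : Real.exp 1 < 3 := by
      have := Real.exp_one_lt_d9
      linarith
    have h2 := Real.log_lt_log (Real.exp_pos 1) h1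
    rwa [Real.log_exp] at h2
  have hfrac : 1/(2*(n:ℝ)) ≤ 1/2 := by
    rw [div_le_div_iff₀ h2n0 (by norm_num)]
    linarith
  have ht : (0:ℝ) < 1/(2*(n:ℝ)) := by positivity
  linarith [hX, hharm, hlog1, hlog2, hlog3]

private lemma site_bound (n : ℕ) (hn : 2 ≤ n) (z : ℂ) (hz : ‖z‖ ≤ 1) :
    Summable (fun j : {m : ℤ // m ≠ (n:ℤ) ∧ m ≠ -(n:ℤ)} => 1/‖(n:ℂ)^2 - ((j:ℤ):ℂ)^2 + z‖)
    ∧ ∑' j : {m : ℤ // m ≠ (n:ℤ) ∧ m ≠ -(n:ℤ)}, 1/‖(n:ℂ)^2 - ((j:ℤ):ℂ)^2 + z‖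
        < 4 * Real.log (6*(n:ℝ)) / (n:ℝ) := by
  set S := {m : ℤ // m ≠ (n:ℤ) ∧ m ≠ -(n:ℤ)} with hSdef
  set f : S → ℝ := fun j => 1/‖(n:ℂ)^2 - ((j:ℤ):ℂ)^2 + z‖ with hfdef
  set C : ℝ := 1/(n:ℝ)^2 + (1/(n:ℝ)) * (Pa 0 ((n:ℤ)-1) + Pa (n:ℤ) (2*(n:ℤ)-1) + Pa 0 (2*(n:ℤ)))
    with hCdef
  have hf0 : ∀ j, 0 ≤ f j := fun j => by simp only [hfdef]; positivity
  have key : ∀ F : Finset S, ∑ j ∈ F, f j ≤ 2 * C := by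
    intro F
    have step1 : ∑ j ∈ F, f j ≤ ∑ j ∈ F, 2 * (1/|(n:ℝ)^2 - ((j:ℤ):ℝ)^2|) := by
      apply Finset.sum_le_sum
      intro j _
      exact pointwise_bound n hn z hz (j:ℤ) j.2.1 j.2.2
    have step2 : ∑ j ∈ F, (1/|(n:ℝ)^2 - ((j:ℤ):ℝ)^2|)
        = ∑ i ∈ F.image (Subtype.val), 1/|(n:ℝ)^2 - (i:ℝ)^2| := by
      rw [Finset.sum_image (by intro a _ b _ h; exact Subtype.ext h)]
    have step3 : ∑ i ∈ F.image Subtype.val, 1/|(n:ℝ)^2 - (i:ℝ)^2| ≤ C := by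
      apply finsum_bound n hn
      intro i hi
      rcases Finset.mem_image.mp hi with ⟨a, _, rfl⟩
      exact a.2
    calc ∑ j ∈ F, f j ≤ ∑ j ∈ F, 2 * (1/|(n:ℝ)^2 - ((j:ℤ):ℝ)^2|) := step1
      _ = 2 * ∑ j ∈ F, (1/|(n:ℝ)^2 - ((j:ℤ):ℝ)^2|) := by rw [Finset.mul_sum]
      _ = 2 * ∑ i ∈ F.image Subtype.val, 1/|(n:ℝ)^2 - (i:ℝ)^2| := by rw [step2]
      _ ≤ 2 * C := by linarith [step3]
  have hsumm : Summable f := summable_of_sum_le (fun j => hf0 j) key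
  refine ⟨hsumm, ?_⟩
  have h1 : ∑' j, f j ≤ 2 * C := Summable.tsum_le_of_sum_le hsumm key
  have h2 := const_bound n hn
  calc ∑' j, f j ≤ 2 * C := h1
    _ < 2 * (2 * Real.log (6*(n:ℝ)) / (n:ℝ)) := by
        have : C < 2 * Real.log (6*(n:ℝ)) / (n:ℝ) := h2
        linarith
    _ = 4 * Real.log (6*(n:ℝ)) / (n:ℝ) := by ring

/-- For every integer `n ≥ 2`, every integer `ν ≥ 1`, and every `z ∈ ℂ` with `|z| ≤ 1`,
the sum over all `ν`-tuples `(j₁, …, j_ν)` of integers avoiding `±n` of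
`∏_{s=1}^ν 1/|n² - j_s² + z|` is strictly less than `(4 log(6n) / n)^ν`. -/
theorem mathieu_stmt_1 (n : ℕ) (hn : 2 ≤ n) (ν : ℕ) (hν : 1 ≤ ν) (z : ℂ) (hz : ‖z‖ ≤ 1) :
    Summable (fun j : Fin ν → {m : ℤ // m ≠ (n : ℤ) ∧ m ≠ -(n : ℤ)} =>
      ∏ s : Fin ν, 1 / ‖(n : ℂ) ^ 2 - ((j s : ℤ) : ℂ) ^ 2 + z‖) ∧
    ∑' j : Fin ν → {m : ℤ // m ≠ (n : ℤ) ∧ m ≠ -(n : ℤ)},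
        ∏ s : Fin ν, 1 / ‖(n : ℂ) ^ 2 - ((j s : ℤ) : ℂ) ^ 2 + z‖
      < (4 * Real.log (6 * n) / n) ^ ν := by
  obtain ⟨hsumm, hlt⟩ := site_bound n hn z hz
  have hf0 : ∀ j : {m : ℤ // m ≠ (n:ℤ) ∧ m ≠ -(n:ℤ)},
      0 ≤ 1/‖(n:ℂ)^2 - ((j:ℤ):ℂ)^2 + z‖ := fun j => by positivity
  have htuple := tuple_hasSum (fun j : {m : ℤ // m ≠ (n:ℤ) ∧ m ≠ -(n:ℤ)} =>
    1/‖(n:ℂ)^2 - ((j:ℤ):ℂ)^2 + z‖) hf0 hsumm ν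
  constructor
  · exact htuple.summable
  · rw [htuple.tsum_eq]
    have hL0 : 0 ≤ ∑' j : {m : ℤ // m ≠ (n:ℤ) ∧ m ≠ -(n:ℤ)},
        1/‖(n:ℂ)^2 - ((j:ℤ):ℂ)^2 + z‖ := tsum_nonneg hf0
    exact pow_lt_pow_left₀ hlt hL0 (by omega)
end

section
/- Let a ∈ ℂ, a ≠ 0, and let V be the Mathieu Fourier coefficients. For every integer n ≥ 2, every z ∈ ℂ with |z| ≤ 1, and every integer ν with 0 ≤ ν < n − 1, one has S_ν^{21}(n,z) = 0. -/
open Complex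

/-- Extended walk: `extWalk b e k j i` equals `b` for `i = 0`, `j (i-1)` for `1 ≤ i ≤ k`,
and `e` for `i > k`. -/
def extWalk (b e : ℤ) (k : ℕ) (j : Fin k → ℤ) : ℕ → ℤ := fun i =>
  if h : 1 ≤ i ∧ i ≤ k then j ⟨i - 1, by omega⟩ else if i = 0 then b else e

/-- Generic term of the sums `S_k^{ij}(n,z)`: for a `k`-tuple `j` of integers avoiding `±n`,
the value `V(j₁ - b) V(j₂ - j₁) ⋯ V(j_k - j_{k-1}) V(e - j_k) / ∏_s (n² - j_s² + z)`. -/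
noncomputable def Sterm (V : ℤ → ℂ) (n : ℕ) (z : ℂ) (b e : ℤ) (k : ℕ)
    (j : Fin k → {m : ℤ // m ≠ (n : ℤ) ∧ m ≠ -(n : ℤ)}) : ℂ :=
  (∏ i ∈ Finset.range (k + 1),
      V (extWalk b e k (fun s => (j s : ℤ)) (i + 1) - extWalk b e k (fun s => (j s : ℤ)) i)) /
    ∏ s : Fin k, ((n : ℂ) ^ 2 - ((j s : ℤ) : ℂ) ^ 2 + z)

/-- The Mathieu Fourier coefficients: `V(2) = V(-2) = a` and `V(m) = 0` for `m ≠ ±2`. -/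
noncomputable def mathieuV (a : ℂ) : ℤ → ℂ := fun m => if m = 2 ∨ m = -2 then a else 0

/-- `S_k^{21}(n,z)` for the Mathieu potential (for `k = 0` it equals `V(2n)`). -/
noncomputable def S21 (a : ℂ) (n : ℕ) (z : ℂ) (k : ℕ) : ℂ :=
  ∑' j : Fin k → {m : ℤ // m ≠ (n : ℤ) ∧ m ≠ -(n : ℤ)},
    Sterm (mathieuV a) n z (-(n : ℤ)) (n : ℤ) k j

/-- For the Mathieu potential, `S_ν^{21}(n,z) = 0` whenever `0 ≤ ν < n - 1`. -/
theorem mathieu_stmt_5 (a : ℂ) (ha : a ≠ 0) (n : ℕ) (hn : 2 ≤ n) (z : ℂ) (hz : ‖z‖ ≤ 1)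
    (ν : ℕ) (hν : ν < n - 1) :
    S21 a n z ν = 0 := by
  unfold S21
  have h : ∀ j : Fin ν → {m : ℤ // m ≠ (n : ℤ) ∧ m ≠ -(n : ℤ)},
      Sterm (mathieuV a) n z (-(n : ℤ)) (n : ℤ) ν j = 0 := by
    intro j
    unfold Sterm
    set w : ℕ → ℤ := extWalk (-(n : ℤ)) (n : ℤ) ν (fun s => (j s : ℤ)) with hw
    suffices hnum : (∏ i ∈ Finset.range (ν + 1), mathieuV a (w (i + 1) - w i)) = 0 by
      rw [hnum, zero_div]
    by_contra hne
    have hsteps : ∀ i ∈ Finset.range (ν + 1), |w (i + 1) - w i| ≤ 2 := by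
      intro i hi
      have : mathieuV a (w (i + 1) - w i) ≠ 0 := fun h0 => hne (Finset.prod_eq_zero hi h0)
      unfold mathieuV at this
      have hcase : w (i + 1) - w i = 2 ∨ w (i + 1) - w i = -2 := by
        by_contra hc
        exact this (if_neg hc)
      rcases hcase with h | h <;> simp [h]
    have htel : ∑ i ∈ Finset.range (ν + 1), (w (i + 1) - w i) = w (ν + 1) - w 0 :=
      Finset.sum_range_sub w (ν + 1)
    have hw0 : w 0 = -(n : ℤ) := by
      simp [hw, extWalk]
    have hwend : w (ν + 1) = (n : ℤ) := by
      have h1 : ¬(1 ≤ ν + 1 ∧ ν + 1 ≤ ν) := by omega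
      simp [hw, extWalk, h1]
    have habs : |∑ i ∈ Finset.range (ν + 1), (w (i + 1) - w i)| ≤ 2 * (ν + 1) := by
      calc |∑ i ∈ Finset.range (ν + 1), (w (i + 1) - w i)|
          ≤ ∑ i ∈ Finset.range (ν + 1), |w (i + 1) - w i| := Finset.abs_sum_le_sum_abs _ _
        _ ≤ ∑ _i ∈ Finset.range (ν + 1), (2 : ℤ) := Finset.sum_le_sum hsteps
        _ = 2 * (ν + 1) := by simp [mul_comm]
    rw [htel, hwend, hw0] at habs
    have h2n : ((n : ℤ)) - -(n : ℤ) = 2 * n := by ring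
    rw [h2n, _root_.abs_of_nonneg (by positivity)] at habs
    omega
  simp only [h]
  exact tsum_zero
end

section
/- Let a ∈ ℂ, a ≠ 0, and let V be the Mathieu Fourier coefficients. For every integer n ≥ 2, every z ∈ ℂ with |z| ≤ 1, and every integer k ≥ 1, one has A_{2k}(n,z) = 0. -/
open Complex

/-- `A_p(n,z)` for the Mathieu potential: the sum over `p`-tuples `(j₁,…,j_p)` of integers
avoiding `±n` of `V(-n+j₁) V(j₂-j₁) ⋯ V(j_p-j_{p-1}) V(n-j_p) / ∏_s (n²-j_s²+z)`. -/
noncomputable def Acoef (a : ℂ) (n : ℕ) (z : ℂ) (p : ℕ) : ℂ :=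
  ∑' j : Fin p → {m : ℤ // m ≠ (n : ℤ) ∧ m ≠ -(n : ℤ)},
    Sterm (mathieuV a) n z (n : ℤ) (n : ℤ) p j

/-- For the Mathieu potential, `A_{2k}(n,z) = 0` for every `k ≥ 1`. -/
theorem mathieu_stmt_7 (a : ℂ) (ha : a ≠ 0) (n : ℕ) (hn : 2 ≤ n) (z : ℂ) (hz : ‖z‖ ≤ 1)
    (k : ℕ) (hk : 1 ≤ k) :
    Acoef a n z (2 * k) = 0 := by
  unfold Acoef
  have h : ∀ j : Fin (2 * k) → {m : ℤ // m ≠ (n : ℤ) ∧ m ≠ -(n : ℤ)},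
      Sterm (mathieuV a) n z (n : ℤ) (n : ℤ) (2 * k) j = 0 := by
    intro j
    unfold Sterm
    rw [div_eq_zero_iff]
    left
    by_contra hP
    set g : ℕ → ℤ := extWalk (n : ℤ) (n : ℤ) (2 * k) (fun s => (j s : ℤ)) with hg
    have hne : ∀ i ∈ Finset.range (2 * k + 1),
        mathieuV a (g (i + 1) - g i) ≠ 0 := Finset.prod_ne_zero_iff.mp hP
    have hstep : ∀ i ∈ Finset.range (2 * k + 1),
        ((g (i + 1) - g i : ℤ) : ZMod 4) = 2 := by
      intro i hi
      have := hne i hi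
      unfold mathieuV at this
      by_cases hc : g (i + 1) - g i = 2 ∨ g (i + 1) - g i = -2
      · rcases hc with hc | hc <;> rw [hc] <;> decide
      · simp [hc] at this
    have htel : ∑ i ∈ Finset.range (2 * k + 1), (g (i + 1) - g i) = g (2 * k + 1) - g 0 :=
      Finset.sum_range_sub g (2 * k + 1)
    have hend : g (2 * k + 1) = (n : ℤ) := by
      simp only [hg, extWalk]
      rw [dif_neg (by omega), if_neg (by omega)]
    have hbeg : g 0 = (n : ℤ) := by
      simp only [hg, extWalk]
      norm_num
    have hsum0 : ∑ i ∈ Finset.range (2 * k + 1), (g (i + 1) - g i) = 0 := by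
      rw [htel, hend, hbeg, sub_self]
    have hcast : ((∑ i ∈ Finset.range (2 * k + 1), (g (i + 1) - g i) : ℤ) : ZMod 4) = 0 := by
      rw [hsum0]; rfl
    rw [Int.cast_sum, Finset.sum_congr rfl hstep, Finset.sum_const, Finset.card_range,
      nsmul_eq_mul] at hcast
    have h4 : ((2 * k + 1 : ℕ) : ZMod 4) * 2 = 2 := by
      push_cast
      have h40 : (4 : ZMod 4) = 0 := rfl
      linear_combination (k : ZMod 4) * h40
    rw [h4] at hcast
    exact (by decide : (2 : ZMod 4) ≠ 0) hcast
  simp only [h, tsum_zero]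
end

section
/- Let a ∈ ℂ, a ≠ 0, and let V be the Mathieu Fourier coefficients. For every integer n ≥ 3 and every z ∈ ℂ with |z| ≤ 1, one has A_3(n,z) = a⁴ / ((n²−(n+2)²+z)²·(n²−(n+4)²+z)) + a⁴ / ((n²−(n−2)²+z)²·(n²−(n−4)²+z)). Consequently there is a constant C (depending only on a) such that |A_3(n,z)| ≤ C/n⁴ for all n ≥ 3 and |z| ≤ 1. -/
open Complex

lemma sterm3 (V : ℤ → ℂ) (n : ℕ) (z : ℂ) (b e : ℤ)
    (j : Fin 3 → {m : ℤ // m ≠ (n:ℤ) ∧ m ≠ -(n:ℤ)}) :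
    Sterm V n z b e 3 j =
      (V ((j 0 : ℤ) - b) * V ((j 1 : ℤ) - (j 0 : ℤ)) * V ((j 2 : ℤ) - (j 1 : ℤ)) *
        V (e - (j 2 : ℤ))) /
      (((n:ℂ)^2 - ((j 0 : ℤ):ℂ)^2 + z) * ((n:ℂ)^2 - ((j 1 : ℤ):ℂ)^2 + z) *
        ((n:ℂ)^2 - ((j 2 : ℤ):ℂ)^2 + z)) := by
  unfold Sterm extWalk
  rw [Fin.prod_univ_three]
  norm_num [Finset.prod_range_succ]
  simp only [show (⟨2, by omega⟩ : Fin 3) = 2 from rfl]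

lemma lbound (w : ℝ) (z : ℂ) : |w| - ‖z‖ ≤ ‖(w:ℂ) + z‖ := by
  have h : ‖(w:ℂ)‖ ≤ ‖(w:ℂ) + z‖ + ‖z‖ := by
    calc ‖(w:ℂ)‖ = ‖((w:ℂ) + z) + (-z)‖ := by ring_nf
    _ ≤ ‖(w:ℂ) + z‖ + ‖-z‖ := norm_add_le _ _
    _ = ‖(w:ℂ) + z‖ + ‖z‖ := by rw [norm_neg]
  rw [Complex.norm_real, Real.norm_eq_abs] at h; linarith

set_option maxHeartbeats 1600000 in
/-- For the Mathieu potential, an explicit formula for `A_3(n,z)`, and consequently a bound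
`|A_3(n,z)| ≤ C/n⁴` for all `n ≥ 3` and `|z| ≤ 1`, with `C` depending only on `a`. -/
theorem mathieu_stmt_9 (a : ℂ) (ha : a ≠ 0) :
    (∀ n : ℕ, 3 ≤ n → ∀ z : ℂ, ‖z‖ ≤ 1 →
      Acoef a n z 3
        = a ^ 4 / (((n : ℂ) ^ 2 - ((n : ℂ) + 2) ^ 2 + z) ^ 2 *
            ((n : ℂ) ^ 2 - ((n : ℂ) + 4) ^ 2 + z))
          + a ^ 4 / (((n : ℂ) ^ 2 - ((n : ℂ) - 2) ^ 2 + z) ^ 2 *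
            ((n : ℂ) ^ 2 - ((n : ℂ) - 4) ^ 2 + z))) ∧
    ∃ C : ℝ, ∀ n : ℕ, 3 ≤ n → ∀ z : ℂ, ‖z‖ ≤ 1 →
      ‖Acoef a n z 3‖ ≤ C / (n : ℝ) ^ 4 := by
  have part1 : ∀ n : ℕ, 3 ≤ n → ∀ z : ℂ, ‖z‖ ≤ 1 →
      Acoef a n z 3
        = a ^ 4 / (((n : ℂ) ^ 2 - ((n : ℂ) + 2) ^ 2 + z) ^ 2 *
            ((n : ℂ) ^ 2 - ((n : ℂ) + 4) ^ 2 + z))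
          + a ^ 4 / (((n : ℂ) ^ 2 - ((n : ℂ) - 2) ^ 2 + z) ^ 2 *
            ((n : ℂ) ^ 2 - ((n : ℂ) - 4) ^ 2 + z)) := by
    intro n hn z hz
    have hn3 : (3:ℤ) ≤ (n:ℤ) := by exact_mod_cast hn
    set S := {m : ℤ // m ≠ (n : ℤ) ∧ m ≠ -(n : ℤ)} with hS
    have hp2 : ((n:ℤ)+2) ≠ (n:ℤ) ∧ ((n:ℤ)+2) ≠ -(n:ℤ) := by omega
    have hp4 : ((n:ℤ)+4) ≠ (n:ℤ) ∧ ((n:ℤ)+4) ≠ -(n:ℤ) := by omega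
    have hm2 : ((n:ℤ)-2) ≠ (n:ℤ) ∧ ((n:ℤ)-2) ≠ -(n:ℤ) := by omega
    have hm4 : ((n:ℤ)-4) ≠ (n:ℤ) ∧ ((n:ℤ)-4) ≠ -(n:ℤ) := by omega
    set w1 : Fin 3 → S := ![⟨(n:ℤ)+2, hp2⟩, ⟨(n:ℤ)+4, hp4⟩, ⟨(n:ℤ)+2, hp2⟩] with hw1
    set w2 : Fin 3 → S := ![⟨(n:ℤ)-2, hm2⟩, ⟨(n:ℤ)-4, hm4⟩, ⟨(n:ℤ)-2, hm2⟩] with hw2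
    have key : Acoef a n z 3 = ∑ j ∈ ({w1, w2} : Finset (Fin 3 → S)),
        Sterm (mathieuV a) n z (n:ℤ) (n:ℤ) 3 j := by
      apply tsum_eq_sum
      intro j hj
      simp only [Finset.mem_insert, Finset.mem_singleton, not_or] at hj
      rw [sterm3]
      by_cases h1 : ((j 0 : ℤ)) - (n:ℤ) = 2 ∨ ((j 0 : ℤ)) - (n:ℤ) = -2
      · by_cases h2 : ((j 1 : ℤ)) - ((j 0 : ℤ)) = 2 ∨ ((j 1 : ℤ)) - ((j 0 : ℤ)) = -2
        · by_cases h3 : ((j 2 : ℤ)) - ((j 1 : ℤ)) = 2 ∨ ((j 2 : ℤ)) - ((j 1 : ℤ)) = -2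
          · by_cases h4 : (n:ℤ) - ((j 2 : ℤ)) = 2 ∨ (n:ℤ) - ((j 2 : ℤ)) = -2
            · exfalso
              have hj0 := (j 0).2
              have hj1 := (j 1).2
              have hj2 := (j 2).2
              have hcase : ((j 0 : ℤ) = (n:ℤ)+2 ∧ (j 1 : ℤ) = (n:ℤ)+4 ∧ (j 2:ℤ) = (n:ℤ)+2)
                  ∨ ((j 0 : ℤ) = (n:ℤ)-2 ∧ (j 1 : ℤ) = (n:ℤ)-4 ∧ (j 2:ℤ) = (n:ℤ)-2) := by
                omega
              rcases hcase with ⟨c0, c1, c2⟩ | ⟨c0, c1, c2⟩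
              · exact hj.1 (by
                  funext i
                  fin_cases i <;> apply Subtype.ext <;>
                    simp [hw1, Matrix.cons_val_zero, Matrix.cons_val_one] <;> omega)
              · exact hj.2 (by
                  funext i
                  fin_cases i <;> apply Subtype.ext <;>
                    simp [hw2, Matrix.cons_val_zero, Matrix.cons_val_one] <;> omega)
            · simp [mathieuV, h4]
          · simp [mathieuV, h3]
        · simp [mathieuV, h2]
      · simp [mathieuV, h1]
    have hne : w1 ≠ w2 := by
      intro h
      have h0 : ((w1 0 : ℤ)) = ((w2 0 : ℤ)) := by rw [h]
      have h0' : ((n:ℤ)+2) = (n:ℤ)-2 := h0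
      omega
    rw [key, Finset.sum_pair hne, sterm3, sterm3]
    have e1 : ((w1 0 : ℤ)) = (n:ℤ)+2 := rfl
    have e2 : ((w1 1 : ℤ)) = (n:ℤ)+4 := rfl
    have e3 : ((w1 2 : ℤ)) = (n:ℤ)+2 := rfl
    have f1 : ((w2 0 : ℤ)) = (n:ℤ)-2 := rfl
    have f2 : ((w2 1 : ℤ)) = (n:ℤ)-4 := rfl
    have f3 : ((w2 2 : ℤ)) = (n:ℤ)-2 := rfl
    rw [e1, e2, e3, f1, f2, f3]
    rw [show ((n:ℤ)+2) - (n:ℤ) = 2 by ring, show ((n:ℤ)+4) - ((n:ℤ)+2) = 2 by ring,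
      show ((n:ℤ)+2) - ((n:ℤ)+4) = -2 by ring, show (n:ℤ) - ((n:ℤ)+2) = -2 by ring,
      show ((n:ℤ)-2) - (n:ℤ) = -2 by ring, show ((n:ℤ)-4) - ((n:ℤ)-2) = -2 by ring,
      show ((n:ℤ)-2) - ((n:ℤ)-4) = 2 by ring, show (n:ℤ) - ((n:ℤ)-2) = 2 by ring]
    simp only [mathieuV]
    norm_num
    push_cast
    rw [show a * a * a * a = a^4 by ring,
      show ((n:ℂ)^2-((n:ℂ)+2)^2+z)*((n:ℂ)^2-((n:ℂ)+4)^2+z)*((n:ℂ)^2-((n:ℂ)+2)^2+z)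
        = ((n:ℂ)^2-((n:ℂ)+2)^2+z)^2*((n:ℂ)^2-((n:ℂ)+4)^2+z) from by ring,
      show ((n:ℂ)^2-((n:ℂ)-2)^2+z)*((n:ℂ)^2-((n:ℂ)-4)^2+z)*((n:ℂ)^2-((n:ℂ)-2)^2+z)
        = ((n:ℂ)^2-((n:ℂ)-2)^2+z)^2*((n:ℂ)^2-((n:ℂ)-4)^2+z) from by ring]
  refine ⟨part1, ⟨2034 * ‖a‖^4, fun n hn z hz => ?_⟩⟩
  have hnR : (3:ℝ) ≤ (n:ℝ) := by exact_mod_cast hn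
  set d1 : ℂ := (n : ℂ) ^ 2 - ((n : ℂ) + 2) ^ 2 + z with hd1
  set d3 : ℂ := (n : ℂ) ^ 2 - ((n : ℂ) + 4) ^ 2 + z with hd3
  set d2 : ℂ := (n : ℂ) ^ 2 - ((n : ℂ) - 2) ^ 2 + z with hd2
  set d4 : ℂ := (n : ℂ) ^ 2 - ((n : ℂ) - 4) ^ 2 + z with hd4
  have hb1 : (n:ℝ) ≤ ‖d1‖ := by
    have e : d1 = ((-(4*(n:ℝ)+4) : ℝ) : ℂ) + z := by rw [hd1]; push_cast; ring
    have := lbound (-(4*(n:ℝ)+4)) z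
    rw [abs_neg, _root_.abs_of_nonneg (by linarith)] at this
    rw [e]; linarith
  have hb2 : (n:ℝ) ≤ ‖d2‖ := by
    have e : d2 = (((4*(n:ℝ)-4) : ℝ) : ℂ) + z := by rw [hd2]; push_cast; ring
    have := lbound ((4*(n:ℝ)-4)) z
    rw [_root_.abs_of_nonneg (by linarith)] at this
    rw [e]; linarith
  have hb3 : (n:ℝ) ≤ ‖d3‖ := by
    have e : d3 = ((-(8*(n:ℝ)+16) : ℝ) : ℂ) + z := by rw [hd3]; push_cast; ring
    have := lbound (-(8*(n:ℝ)+16)) z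
    rw [abs_neg, _root_.abs_of_nonneg (by linarith)] at this
    rw [e]; linarith
  have hb4 : (n:ℝ) ≤ ‖d4‖ := by
    have e : d4 = (((8*(n:ℝ)-16) : ℝ) : ℂ) + z := by rw [hd4]; push_cast; ring
    have := lbound ((8*(n:ℝ)-16)) z
    rw [_root_.abs_of_nonneg (by linarith)] at this
    rw [e]; linarith
  have hnpos : (0:ℝ) < (n:ℝ) := by linarith
  have h1ne : d1 ≠ 0 := by intro h; rw [h] at hb1; simp at hb1; linarith
  have h2ne : d2 ≠ 0 := by intro h; rw [h] at hb2; simp at hb2; linarith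
  have h3ne : d3 ≠ 0 := by intro h; rw [h] at hb3; simp at hb3; linarith
  have h4ne : d4 ≠ 0 := by intro h; rw [h] at hb4; simp at hb4; linarith
  have hform := part1 n hn z hz
  rw [← hd1, ← hd2, ← hd3, ← hd4] at hform
  set N : ℂ := (160*z - 1024)*(n:ℂ)^2 + (2*z^3 - 48*z^2 + 288*z - 512) with hNdef
  have hsum : Acoef a n z 3 = a^4 * N / ((d1^2*d3) * (d2^2*d4)) := by
    rw [hform]
    have hD1 : d1^2*d3 ≠ 0 := mul_ne_zero (pow_ne_zero _ h1ne) h3ne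
    have hD2 : d2^2*d4 ≠ 0 := mul_ne_zero (pow_ne_zero _ h2ne) h4ne
    field_simp
    rw [hNdef, hd1, hd2, hd3, hd4]; ring
  have hNbd : ‖N‖ ≤ 2034 * (n:ℝ)^2 := by
    have t1 : ‖(160:ℂ)*z - 1024‖ ≤ 1184 := by
      calc ‖(160:ℂ)*z - 1024‖ ≤ ‖(160:ℂ)*z‖ + ‖(1024:ℂ)‖ := norm_sub_le _ _
      _ = 160 * ‖z‖ + 1024 := by rw [norm_mul]; norm_num
      _ ≤ 1184 := by linarith
    have hz0 := norm_nonneg z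
    have hz3 : ‖z‖^3 ≤ 1 := pow_le_one₀ hz0 hz
    have hz2 : ‖z‖^2 ≤ 1 := pow_le_one₀ hz0 hz
    have t2 : ‖(2:ℂ)*z^3 - 48*z^2 + 288*z - 512‖ ≤ 850 := by
      calc ‖(2:ℂ)*z^3 - 48*z^2 + 288*z - 512‖
          ≤ ‖(2:ℂ)*z^3 - 48*z^2 + 288*z‖ + ‖(512:ℂ)‖ := norm_sub_le _ _
      _ ≤ ‖(2:ℂ)*z^3 - 48*z^2‖ + ‖(288:ℂ)*z‖ + ‖(512:ℂ)‖ := by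
            have := norm_add_le ((2:ℂ)*z^3 - 48*z^2) ((288:ℂ)*z); linarith
      _ ≤ ‖(2:ℂ)*z^3‖ + ‖(48:ℂ)*z^2‖ + ‖(288:ℂ)*z‖ + ‖(512:ℂ)‖ := by
            have := norm_sub_le ((2:ℂ)*z^3) ((48:ℂ)*z^2); linarith
      _ = 2*‖z‖^3 + 48*‖z‖^2 + 288*‖z‖ + 512 := by
            rw [norm_mul, norm_mul, norm_mul, norm_pow, norm_pow]; norm_num
      _ ≤ 850 := by linarith
    have hn2 : (1:ℝ) ≤ (n:ℝ)^2 := by nlinarith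
    calc ‖N‖ ≤ ‖(160*z - 1024)*(n:ℂ)^2‖ + ‖(2:ℂ)*z^3 - 48*z^2 + 288*z - 512‖ :=
          norm_add_le _ _
    _ = ‖(160:ℂ)*z - 1024‖ * (n:ℝ)^2 + ‖(2:ℂ)*z^3 - 48*z^2 + 288*z - 512‖ := by
          rw [norm_mul, norm_pow, Complex.norm_natCast]
    _ ≤ 1184 * (n:ℝ)^2 + 850 := by nlinarith
    _ ≤ 2034 * (n:ℝ)^2 := by nlinarith
  rw [hsum]
  simp only [norm_div, norm_mul, norm_pow]
  have hden : (n:ℝ)^6 ≤ ‖d1‖^2 * ‖d3‖ * (‖d2‖^2 * ‖d4‖) := by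
    have h1 : (n:ℝ)^2 ≤ ‖d1‖^2 := by nlinarith
    have h2 : (n:ℝ)^2 ≤ ‖d2‖^2 := by nlinarith
    have A : (n:ℝ)^2*(n:ℝ) ≤ ‖d1‖^2*‖d3‖ :=
      mul_le_mul h1 hb3 (le_of_lt hnpos) (by positivity)
    have B : (n:ℝ)^2*(n:ℝ) ≤ ‖d2‖^2*‖d4‖ :=
      mul_le_mul h2 hb4 (le_of_lt hnpos) (by positivity)
    calc (n:ℝ)^6 = ((n:ℝ)^2*(n:ℝ))*((n:ℝ)^2*(n:ℝ)) := by ring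
    _ ≤ (‖d1‖^2*‖d3‖)*(‖d2‖^2*‖d4‖) := mul_le_mul A B (by positivity) (by positivity)
  calc ‖a‖^4 * ‖N‖ / (‖d1‖^2 * ‖d3‖ * (‖d2‖^2 * ‖d4‖))
      ≤ ‖a‖^4 * (2034 * (n:ℝ)^2) / (n:ℝ)^6 := by
        apply div_le_div₀ (by positivity) _ (by positivity) hden
        have : (0:ℝ) ≤ ‖a‖^4 := by positivity
        nlinarith [norm_nonneg N]
  _ = 2034 * ‖a‖^4 / (n:ℝ)^4 := by field_simp
end

section
/- Let a ∈ ℂ, a ≠ 0. There exist a constant C > 0 and an integer N such that for all n ≥ N and all z ∈ ℂ with |z| ≤ 1, the series defining α_n(z) converges absolutely and |α_n(z)| ≤ C/n². -/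
open Complex

/-- `α_n(z) = ∑_{p=1}^∞ A_p(n,z)`. -/
noncomputable def alphaC (a : ℂ) (n : ℕ) (z : ℂ) : ℂ := ∑' p : ℕ, Acoef a n z (p + 1)

namespace MathieuAux

lemma extWalk_zero (b e : ℤ) (k : ℕ) (j : Fin k → ℤ) : extWalk b e k j 0 = b := by
  simp [extWalk]

lemma extWalk_succ (b e : ℤ) (k : ℕ) (j : Fin k → ℤ) (i : ℕ) (h : i < k) :
    extWalk b e k j (i + 1) = j ⟨i, h⟩ := by
  have h' : 1 ≤ i + 1 ∧ i + 1 ≤ k := ⟨by omega, by omega⟩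
  simp only [extWalk, dif_pos h']
  rfl

lemma extWalk_top (b e : ℤ) (k : ℕ) (j : Fin k → ℤ) (i : ℕ) (h : k < i) :
    extWalk b e k j i = e := by
  have h1 : ¬(1 ≤ i ∧ i ≤ k) := by omega
  simp only [extWalk, dif_neg h1, if_neg (by omega : ¬ i = 0)]

lemma norm_mathieuV_le (a : ℂ) (m : ℤ) : ‖mathieuV a m‖ ≤ ‖a‖ := by
  unfold mathieuV; split <;> simp

lemma mathieuV_ne {a : ℂ} {m : ℤ} (h : mathieuV a m ≠ 0) : m = 2 ∨ m = -2 := by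
  by_contra hc
  exact h (by simp only [mathieuV, if_neg (by tauto)])

lemma int_gap {n : ℕ} {j : ℤ} (hn : 2 ≤ n) (h1 : j ≠ (n : ℤ)) (h2 : j ≠ -(n : ℤ)) :
    (2 * (n : ℤ) - 1) ≤ |(n : ℤ) ^ 2 - j ^ 2| := by
  have hn' : (2 : ℤ) ≤ (n : ℤ) := by exact_mod_cast hn
  rcases (by omega : (-((n:ℤ) - 1) ≤ j ∧ j ≤ (n:ℤ) - 1) ∨ (n:ℤ) + 1 ≤ j ∨ j ≤ -((n:ℤ) + 1))
    with h | h | h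
  · refine le_trans ?_ (le_abs_self _); nlinarith [h.1, h.2]
  · rw [abs_sub_comm]; refine le_trans ?_ (le_abs_self _); nlinarith
  · rw [abs_sub_comm]; refine le_trans ?_ (le_abs_self _); nlinarith

lemma factor_lb {n : ℕ} {z : ℂ} (hn : 2 ≤ n) (hz : ‖z‖ ≤ 1) {j : ℤ}
    (h1 : j ≠ (n : ℤ)) (h2 : j ≠ -(n : ℤ)) :
    2 * (n : ℝ) - 2 ≤ ‖(n : ℂ) ^ 2 - (j : ℂ) ^ 2 + z‖ := by
  have key : (2 * (n : ℝ) - 1) ≤ ‖(n : ℂ) ^ 2 - (j : ℂ) ^ 2‖ := by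
    have e : (n : ℂ) ^ 2 - (j : ℂ) ^ 2 = (((n : ℤ) ^ 2 - j ^ 2 : ℤ) : ℂ) := by push_cast; ring
    rw [e, Complex.norm_intCast]
    have := int_gap hn h1 h2
    have : ((2 * (n:ℤ) - 1 : ℤ) : ℝ) ≤ ((|(n:ℤ)^2 - j^2| : ℤ) : ℝ) := by exact_mod_cast this
    rw [Int.cast_abs] at this
    push_cast at this ⊢
    linarith
  have h3 : ‖(n : ℂ) ^ 2 - (j : ℂ) ^ 2‖ - ‖z‖ ≤ ‖(n : ℂ) ^ 2 - (j : ℂ) ^ 2 + z‖ := by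
    have := norm_add_le ((n : ℂ) ^ 2 - (j : ℂ) ^ 2 + z) (-z)
    simp only [add_neg_cancel_right, norm_neg] at this
    linarith
  linarith

lemma Sterm_bound {a : ℂ} {z : ℂ} {n : ℕ} (hn : 2 ≤ n) (hz : ‖z‖ ≤ 1) (p : ℕ)
    (j : Fin p → {m : ℤ // m ≠ (n : ℤ) ∧ m ≠ -(n : ℤ)}) :
    ‖Sterm (mathieuV a) n z n n p j‖ ≤ ‖a‖ ^ (p + 1) / (2 * (n : ℝ) - 2) ^ p := by
  have hnR : (2 : ℝ) ≤ (n : ℝ) := by exact_mod_cast hn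
  have hpos : (0 : ℝ) < 2 * (n : ℝ) - 2 := by linarith
  have hnum : ‖∏ i ∈ Finset.range (p + 1),
      mathieuV a (extWalk n n p (fun s => (j s : ℤ)) (i + 1)
        - extWalk n n p (fun s => (j s : ℤ)) i)‖ ≤ ‖a‖ ^ (p + 1) := by
    rw [norm_prod]
    have : ∀ i ∈ Finset.range (p + 1),
        ‖mathieuV a (extWalk n n p (fun s => (j s : ℤ)) (i + 1)
          - extWalk n n p (fun s => (j s : ℤ)) i)‖ ≤ ‖a‖ :=
      fun i _ => norm_mathieuV_le a _
    refine le_trans (Finset.prod_le_prod (fun _ _ => norm_nonneg _) this) ?_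
    rw [Finset.prod_const, Finset.card_range]
  have hden : (2 * (n : ℝ) - 2) ^ p ≤
      ‖∏ s : Fin p, ((n : ℂ) ^ 2 - ((j s : ℤ) : ℂ) ^ 2 + z)‖ := by
    rw [norm_prod]
    have : ∀ s : Fin p, s ∈ Finset.univ →
        (2 * (n : ℝ) - 2) ≤ ‖(n : ℂ) ^ 2 - ((j s : ℤ) : ℂ) ^ 2 + z‖ :=
      fun s _ => factor_lb hn hz (j s).2.1 (j s).2.2
    have h := Finset.prod_le_prod (f := fun _ : Fin p => 2 * (n : ℝ) - 2)
      (fun _ _ => le_of_lt hpos) this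
    rwa [Finset.prod_const, Finset.card_univ, Fintype.card_fin] at h
  rw [Sterm, norm_div]
  exact div_le_div₀ (by positivity) hnum (lt_of_lt_of_le (pow_pos hpos p) hden)
    (le_refl _) |>.trans (div_le_div_of_nonneg_left (by positivity) (pow_pos hpos p) hden)

/-- sign data of a tuple -/
def signs (n p : ℕ) (j : Fin p → {m : ℤ // m ≠ (n : ℤ) ∧ m ≠ -(n : ℤ)}) : Fin p → Bool :=
  fun s => decide (extWalk n n p (fun t => (j t : ℤ)) (s.val + 1)
      - extWalk n n p (fun t => (j t : ℤ)) s.val = 2)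

lemma steps {a : ℂ} {z : ℂ} {n p : ℕ}
    {j : Fin p → {m : ℤ // m ≠ (n : ℤ) ∧ m ≠ -(n : ℤ)}}
    (h : Sterm (mathieuV a) n z n n p j ≠ 0) (i : ℕ) (hi : i ≤ p) :
    extWalk n n p (fun t => (j t : ℤ)) (i + 1) - extWalk n n p (fun t => (j t : ℤ)) i = 2 ∨
    extWalk n n p (fun t => (j t : ℤ)) (i + 1) - extWalk n n p (fun t => (j t : ℤ)) i = -2 := by
  have hnum : (∏ i ∈ Finset.range (p + 1),
      mathieuV a (extWalk n n p (fun s => (j s : ℤ)) (i + 1)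
        - extWalk n n p (fun s => (j s : ℤ)) i)) ≠ 0 := by
    intro h0
    exact h (by rw [Sterm, h0, zero_div])
  have := Finset.prod_ne_zero_iff.mp hnum i (Finset.mem_range.mpr (by omega))
  exact mathieuV_ne this

lemma signs_injOn (a : ℂ) (z : ℂ) (n p : ℕ) :
    Set.InjOn (signs n p)
      (Function.support (fun j => Sterm (mathieuV a) n z n n p j)) := by
  intro j hj j' hj' he
  have key : ∀ i, i ≤ p →
      extWalk n n p (fun t => (j t : ℤ)) i = extWalk n n p (fun t => (j' t : ℤ)) i := by
    intro i
    induction i with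
    | zero => intro _; rw [extWalk_zero, extWalk_zero]
    | succ m ih =>
      intro hm1
      have hm : m ≤ p := by omega
      have h1 := steps hj m hm
      have h2 := steps hj' m hm
      have hIH := ih hm
      have heq : signs n p j ⟨m, by omega⟩ = signs n p j' ⟨m, by omega⟩ := congrFun he _
      simp only [signs, decide_eq_decide] at heq
      rcases h1 with h1 | h1 <;> rcases h2 with h2 | h2 <;> rw [hIH] at h1 <;> omega
  funext s
  apply Subtype.ext
  have := key (s.val + 1) (by omega)
  rw [extWalk_succ _ _ _ _ _ s.isLt, extWalk_succ _ _ _ _ _ s.isLt] at this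
  simpa using this

lemma Acoef_norm_le {a : ℂ} {z : ℂ} {n : ℕ} (hn : 2 ≤ n) (hz : ‖z‖ ≤ 1) (p : ℕ) :
    ‖Acoef a n z p‖ ≤ 2 ^ p * (‖a‖ ^ (p + 1) / (2 * (n : ℝ) - 2) ^ p) := by
  have hnR : (2 : ℝ) ≤ (n : ℝ) := by exact_mod_cast hn
  have hfin : (Function.support
      (fun j : Fin p → {m : ℤ // m ≠ (n : ℤ) ∧ m ≠ -(n : ℤ)} =>
        Sterm (mathieuV a) n z n n p j)).Finite :=
    Set.Finite.of_finite_image (Set.toFinite _) (signs_injOn a z n p)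
  have hz0 : ∀ j ∉ hfin.toFinset, Sterm (mathieuV a) n z n n p j = 0 := by
    intro j hj
    by_contra hne
    exact hj (hfin.mem_toFinset.mpr hne)
  have hcard : hfin.toFinset.card ≤ 2 ^ p := by
    have h := Finset.card_le_card_of_injOn (t := (Finset.univ : Finset (Fin p → Bool)))
      (signs n p) (fun x _ => Finset.mem_univ _)
      (by rw [Set.Finite.coe_toFinset hfin]; exact signs_injOn a z n p)
    simpa using h
  rw [Acoef, tsum_eq_sum hz0]
  have hnn : (0:ℝ) ≤ ‖a‖ ^ (p + 1) / (2 * (n : ℝ) - 2) ^ p :=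
    div_nonneg (by positivity) (pow_nonneg (by linarith) _)
  calc ‖∑ j ∈ hfin.toFinset, Sterm (mathieuV a) n z n n p j‖
      ≤ ∑ j ∈ hfin.toFinset, ‖Sterm (mathieuV a) n z n n p j‖ := norm_sum_le _ _
    _ ≤ hfin.toFinset.card • (‖a‖ ^ (p + 1) / (2 * (n : ℝ) - 2) ^ p) :=
        Finset.sum_le_card_nsmul _ _ _ (fun x _ => Sterm_bound hn hz p x)
    _ = hfin.toFinset.card * (‖a‖ ^ (p + 1) / (2 * (n : ℝ) - 2) ^ p) := by
        rw [nsmul_eq_mul]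
    _ ≤ 2 ^ p * (‖a‖ ^ (p + 1) / (2 * (n : ℝ) - 2) ^ p) := by
        apply mul_le_mul_of_nonneg_right _ hnn
        exact_mod_cast hcard

lemma Sterm_one (V : ℤ → ℂ) (n : ℕ) (z : ℂ)
    (j : Fin 1 → {m : ℤ // m ≠ (n : ℤ) ∧ m ≠ -(n : ℤ)}) :
    Sterm V n z n n 1 j =
      (V ((j 0 : ℤ) - n) * V ((n : ℤ) - (j 0 : ℤ))) /
        ((n : ℂ) ^ 2 - ((j 0 : ℤ) : ℂ) ^ 2 + z) := by
  rw [Sterm]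
  rw [Finset.prod_range_succ, Finset.prod_range_one]
  rw [extWalk_zero, extWalk_succ _ _ _ _ 0 (by omega), extWalk_top _ _ _ _ 2 (by omega)]
  rw [Fin.prod_univ_one]
  norm_num

lemma A1_bound {a : ℂ} {z : ℂ} {n : ℕ} (hn : 3 ≤ n) (hz : ‖z‖ ≤ 1) :
    ‖Acoef a n z 1‖ ≤ 10 * ‖a‖ ^ 2 / (n : ℝ) ^ 2 := by
  have hnZ : (3 : ℤ) ≤ (n : ℤ) := by exact_mod_cast hn
  have hnR : (3 : ℝ) ≤ (n : ℝ) := by exact_mod_cast hn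
  set jm : Fin 1 → {m : ℤ // m ≠ (n : ℤ) ∧ m ≠ -(n : ℤ)} :=
    fun _ => ⟨(n : ℤ) - 2, by constructor <;> omega⟩ with hjm
  set jp : Fin 1 → {m : ℤ // m ≠ (n : ℤ) ∧ m ≠ -(n : ℤ)} :=
    fun _ => ⟨(n : ℤ) + 2, by constructor <;> omega⟩ with hjp
  have hne : jm ≠ jp := by
    intro h
    have := congrFun h 0
    rw [hjm, hjp] at this
    simp only [Subtype.mk.injEq] at this
    omega
  have hz0 : ∀ j ∉ ({jm, jp} : Finset _), Sterm (mathieuV a) n z n n 1 j = 0 := by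
    intro j hj
    simp only [Finset.mem_insert, Finset.mem_singleton] at hj
    push_neg at hj
    have h1 : (j 0 : ℤ) ≠ (n : ℤ) - 2 := by
      intro h
      apply hj.1
      funext s
      have hs : s = 0 := Subsingleton.elim s 0
      rw [hs, hjm]
      exact Subtype.ext h
    have h2 : (j 0 : ℤ) ≠ (n : ℤ) + 2 := by
      intro h
      apply hj.2
      funext s
      have hs : s = 0 := Subsingleton.elim s 0
      rw [hs, hjp]
      exact Subtype.ext h
    rw [Sterm_one]
    have : mathieuV a ((j 0 : ℤ) - n) = 0 := by
      rw [mathieuV]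
      simp only [ite_eq_right_iff]
      intro hc
      exfalso
      rcases hc with hc | hc <;> omega
    rw [this, zero_mul, zero_div]
  rw [Acoef, tsum_eq_sum hz0, Finset.sum_pair hne]
  have ejm : Sterm (mathieuV a) n z n n 1 jm = a * a / (4 * (n : ℂ) - 4 + z) := by
    rw [Sterm_one]
    have h1 : ((jm 0 : ℤ)) - (n : ℤ) = -2 := by rw [hjm]; ring
    have h2 : (n : ℤ) - ((jm 0 : ℤ)) = 2 := by rw [hjm]; ring
    rw [h1, h2]
    have hV1 : mathieuV a (-2) = a := by simp [mathieuV]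
    have hV2 : mathieuV a 2 = a := by simp [mathieuV]
    rw [hV1, hV2]
    congr 1
    have : ((jm 0 : ℤ) : ℂ) = (n : ℂ) - 2 := by rw [hjm]; push_cast; ring
    rw [this]; ring
  have ejp : Sterm (mathieuV a) n z n n 1 jp = a * a / (-(4 * (n : ℂ)) - 4 + z) := by
    rw [Sterm_one]
    have h1 : ((jp 0 : ℤ)) - (n : ℤ) = 2 := by rw [hjp]; ring
    have h2 : (n : ℤ) - ((jp 0 : ℤ)) = -2 := by rw [hjp]; ring
    rw [h1, h2]
    have hV1 : mathieuV a (-2) = a := by simp [mathieuV]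
    have hV2 : mathieuV a 2 = a := by simp [mathieuV]
    rw [hV1, hV2]
    congr 1
    have : ((jp 0 : ℤ) : ℂ) = (n : ℂ) + 2 := by rw [hjp]; push_cast; ring
    rw [this]; ring
  rw [ejm, ejp]
  -- norms of the two denominators
  have habs : ∀ w : ℂ, ‖w‖ - 1 ≤ ‖w + z‖ := by
    intro w
    have := norm_add_le (w + z) (-z)
    simp only [add_neg_cancel_right, norm_neg] at this
    linarith
  have hd1 : 4 * (n : ℝ) - 5 ≤ ‖4 * (n : ℂ) - 4 + z‖ := by
    have h := habs (4 * (n : ℂ) - 4)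
    have : ‖4 * (n : ℂ) - 4‖ = 4 * (n : ℝ) - 4 := by
      have e : 4 * (n : ℂ) - 4 = ((4 * (n : ℝ) - 4 : ℝ) : ℂ) := by push_cast; ring
      rw [e, Complex.norm_real, Real.norm_eq_abs, _root_.abs_of_nonneg (by linarith)]
    linarith [h, this.ge, this.le]
  have hd2 : 4 * (n : ℝ) + 3 ≤ ‖-(4 * (n : ℂ)) - 4 + z‖ := by
    have h := habs (-(4 * (n : ℂ)) - 4)
    have : ‖-(4 * (n : ℂ)) - 4‖ = 4 * (n : ℝ) + 4 := by
      have e : -(4 * (n : ℂ)) - 4 = ((-(4 * (n : ℝ) + 4) : ℝ) : ℂ) := by push_cast; ring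
      rw [e, Complex.norm_real, Real.norm_eq_abs, abs_neg, _root_.abs_of_nonneg (by linarith)]
    linarith [h, this.ge, this.le]
  have hD1 : (4 * (n : ℂ) - 4 + z) ≠ 0 := by
    intro h
    rw [h] at hd1
    simp at hd1
    linarith
  have hD2 : (-(4 * (n : ℂ)) - 4 + z) ≠ 0 := by
    intro h
    rw [h] at hd2
    simp at hd2
    linarith
  have hcomb : a * a / (4 * (n : ℂ) - 4 + z) + a * a / (-(4 * (n : ℂ)) - 4 + z) =
      a * a * (2 * z - 8) / ((4 * (n : ℂ) - 4 + z) * (-(4 * (n : ℂ)) - 4 + z)) := by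
    rw [div_add_div _ _ hD1 hD2]
    congr 1
    ring
  rw [hcomb, norm_div, norm_mul, norm_mul, norm_mul]
  have hnum : ‖a‖ * ‖a‖ * ‖2 * z - 8‖ ≤ ‖a‖ ^ 2 * 10 := by
    have h8 : ‖2 * z - 8‖ ≤ 10 := by
      have := norm_sub_le (2 * z) (8 : ℂ)
      have h2z : ‖(2 : ℂ) * z‖ ≤ 2 := by
        rw [norm_mul]
        have : ‖(2 : ℂ)‖ = 2 := by norm_num
        rw [this]; linarith
      have h8' : ‖(8 : ℂ)‖ = 8 := by norm_num
      linarith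
    have : ‖a‖ * ‖a‖ = ‖a‖ ^ 2 := by ring
    nlinarith [norm_nonneg a, sq_nonneg ‖a‖]
  have hdenpos : (0 : ℝ) < (4 * (n : ℝ) - 5) * (4 * (n : ℝ) + 3) := by nlinarith
  have hdenle : (4 * (n : ℝ) - 5) * (4 * (n : ℝ) + 3) ≤
      ‖4 * (n : ℂ) - 4 + z‖ * ‖-(4 * (n : ℂ)) - 4 + z‖ := by
    apply mul_le_mul hd1 hd2 (by linarith) (norm_nonneg _)
  calc ‖a‖ * ‖a‖ * ‖2 * z - 8‖ / (‖4 * (n : ℂ) - 4 + z‖ * ‖-(4 * (n : ℂ)) - 4 + z‖)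
      ≤ ‖a‖ ^ 2 * 10 / ((4 * (n : ℝ) - 5) * (4 * (n : ℝ) + 3)) :=
        div_le_div₀ (by positivity) hnum hdenpos hdenle
    _ ≤ 10 * ‖a‖ ^ 2 / (n : ℝ) ^ 2 := by
        rw [mul_comm (‖a‖ ^ 2) 10]
        apply div_le_div_of_nonneg_left (by positivity) (by positivity)
        nlinarith


end MathieuAux

/-- There are `C > 0` and `N` such that for all `n ≥ N` and `|z| ≤ 1` the series defining
`α_n(z)` converges absolutely and `|α_n(z)| ≤ C/n²`. -/
theorem mathieu_stmt_10 (a : ℂ) (ha : a ≠ 0) :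
    ∃ C > (0 : ℝ), ∃ N : ℕ, ∀ n ≥ N, ∀ z : ℂ, ‖z‖ ≤ 1 →
      Summable (fun p : ℕ => ‖Acoef a n z (p + 1)‖) ∧
      ‖alphaC a n z‖ ≤ C / (n : ℝ) ^ 2 := by
  set K := ‖a‖ with hKdef
  have hK0 : 0 < K := norm_pos_iff.mpr ha
  refine ⟨10 * K ^ 2 + 8 * K ^ 3,
    by nlinarith [pow_pos hK0 2, pow_pos hK0 3], ⌈K⌉₊ * 2 + 3, ?_⟩
  intro n hn z hz
  have hn3 : 3 ≤ n := by omega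
  have hn2 : 2 ≤ n := by omega
  have hnR3 : (3 : ℝ) ≤ (n : ℝ) := by exact_mod_cast hn3
  have hceil : K ≤ (⌈K⌉₊ : ℝ) := Nat.le_ceil K
  have hnK : 2 * K + 3 ≤ (n : ℝ) := by
    have h : ((⌈K⌉₊ * 2 + 3 : ℕ) : ℝ) ≤ (n : ℝ) := by exact_mod_cast hn
    push_cast at h
    linarith
  set r := 2 * K / (2 * (n : ℝ) - 2) with hr
  have hden0 : (0 : ℝ) < 2 * (n : ℝ) - 2 := by linarith
  have hr0 : 0 ≤ r := by positivity
  have hrhalf : r ≤ 1 / 2 := by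
    rw [hr, div_le_div_iff₀ hden0 (by norm_num)]
    linarith
  have hr1 : r < 1 := by linarith
  have hb : ∀ p : ℕ, ‖Acoef a n z (p + 1)‖ ≤ K * r ^ (p + 1) := by
    intro p
    refine (MathieuAux.Acoef_norm_le hn2 hz (p + 1)).trans (le_of_eq ?_)
    rw [hr, div_pow, mul_pow, hKdef]
    field_simp
    ring
  have hgeo : Summable (fun p : ℕ => K * r ^ (p + 1)) := by
    have hs := summable_geometric_of_lt_one hr0 hr1
    exact (hs.mul_left (K * r)).congr fun p => by ring
  have hsum : Summable (fun p : ℕ => ‖Acoef a n z (p + 1)‖) :=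
    Summable.of_nonneg_of_le (fun _ => norm_nonneg _) hb hgeo
  refine ⟨hsum, ?_⟩
  have h0 : ‖alphaC a n z‖ ≤ ∑' p : ℕ, ‖Acoef a n z (p + 1)‖ := norm_tsum_le_tsum_norm hsum
  rw [hsum.tsum_eq_zero_add] at h0
  have htail_s : Summable (fun p : ℕ => ‖Acoef a n z (p + 1 + 1)‖) :=
    (summable_nat_add_iff 1).mpr hsum
  have hgeo2 : Summable (fun p : ℕ => K * r ^ (p + 2)) := by
    have hs := summable_geometric_of_lt_one hr0 hr1
    exact (hs.mul_left (K * r ^ 2)).congr fun p => by rw [pow_add]; ring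
  have htail : ∑' p : ℕ, ‖Acoef a n z (p + 1 + 1)‖ ≤ ∑' p : ℕ, K * r ^ (p + 2) :=
    Summable.tsum_le_tsum (fun p => by simpa using hb (p + 1)) htail_s hgeo2
  have hgeoval : ∑' p : ℕ, K * r ^ (p + 2) = K * r ^ 2 * (1 - r)⁻¹ := by
    calc ∑' p : ℕ, K * r ^ (p + 2) = ∑' p : ℕ, (K * r ^ 2) * r ^ p := by
          congr 1; funext p; rw [pow_add]; ring
      _ = (K * r ^ 2) * ∑' p : ℕ, r ^ p := tsum_mul_left
      _ = K * r ^ 2 * (1 - r)⁻¹ := by rw [tsum_geometric_of_lt_one hr0 hr1]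
  have hA1 := MathieuAux.A1_bound (a := a) hn3 hz
  have hinv : (1 - r)⁻¹ ≤ 2 := by
    have h12 : (1 : ℝ) / 2 ≤ 1 - r := by linarith
    calc (1 - r)⁻¹ ≤ ((1 : ℝ) / 2)⁻¹ := by
          apply inv_anti₀ (by norm_num) h12
      _ = 2 := by norm_num
  have hrle : r ≤ 2 * K / (n : ℝ) := by
    rw [hr]
    exact div_le_div_of_nonneg_left (by positivity) (by linarith) (by linarith)
  have hr2 : r ^ 2 ≤ 4 * K ^ 2 / (n : ℝ) ^ 2 := by
    have h1 : r ^ 2 ≤ (2 * K / (n : ℝ)) ^ 2 := pow_le_pow_left₀ hr0 hrle 2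
    calc r ^ 2 ≤ (2 * K / (n : ℝ)) ^ 2 := h1
      _ = 4 * K ^ 2 / (n : ℝ) ^ 2 := by rw [div_pow]; ring_nf
  have htailval : K * r ^ 2 * (1 - r)⁻¹ ≤ 8 * K ^ 3 / (n : ℝ) ^ 2 := by
    calc K * r ^ 2 * (1 - r)⁻¹ ≤ K * r ^ 2 * 2 :=
          mul_le_mul_of_nonneg_left hinv (by positivity)
      _ ≤ K * (4 * K ^ 2 / (n : ℝ) ^ 2) * 2 := by
          apply mul_le_mul_of_nonneg_right
            (mul_le_mul_of_nonneg_left hr2 (le_of_lt hK0)) (by norm_num)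
      _ = 8 * K ^ 3 / (n : ℝ) ^ 2 := by ring
  rw [hgeoval] at htail
  have hsplit : (10 * K ^ 2 + 8 * K ^ 3) / (n : ℝ) ^ 2 =
      10 * K ^ 2 / (n : ℝ) ^ 2 + 8 * K ^ 3 / (n : ℝ) ^ 2 := by ring
  rw [hsplit]
  simp only [zero_add] at h0
  linarith
end

section
/- Let a ∈ ℂ, a ≠ 0. For every M > 0 there exist a constant C > 0 and an integer N such that for all n ≥ N and all z ∈ ℂ with |z| ≤ M/n², one has |α_n(z) − a²/(2n²)| ≤ C/n⁴. -/
open Complex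

lemma mathieuV_ne_zero {a : ℂ} {m : ℤ} (h : mathieuV a m ≠ 0) : m = 2 ∨ m = -2 := by
  by_contra hc
  push_neg at hc
  simp [mathieuV, hc.1, hc.2] at h

lemma norm_mathieuV_le (a : ℂ) (m : ℤ) : ‖mathieuV a m‖ ≤ ‖a‖ := by
  unfold mathieuV
  split <;> simp [norm_nonneg]

lemma extWalk_zero (b e : ℤ) (k : ℕ) (j : Fin k → ℤ) : extWalk b e k j 0 = b := by
  simp [extWalk]

lemma extWalk_last (b e : ℤ) (k : ℕ) (j : Fin k → ℤ) : extWalk b e k j (k+1) = e := by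
  have h : ¬(1 ≤ k+1 ∧ k+1 ≤ k) := by omega
  simp [extWalk, h]

lemma extWalk_mid (b e : ℤ) (k : ℕ) (j : Fin k → ℤ) (s : Fin k) :
    extWalk b e k j ((s : ℕ) + 1) = j s := by
  have h : 1 ≤ (s:ℕ)+1 ∧ (s:ℕ)+1 ≤ k := ⟨by omega, s.2⟩
  simp only [extWalk, dif_pos h]
  congr 1

lemma int_denom_lb {n : ℕ} (hn : 1 ≤ n) {j : ℤ} (h1 : j ≠ (n:ℤ)) (h2 : j ≠ -(n:ℤ)) :
    2*(n:ℤ) - 1 ≤ |(n:ℤ)^2 - j^2| := by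
  have hk : j.natAbs ≠ n := by omega
  have hj2 : j^2 = ((j.natAbs : ℤ))^2 := by
    push_cast [← Int.natAbs_sq j]; rfl
  rcases lt_or_gt_of_ne hk with hlt | hgt
  · have h1 : (j.natAbs : ℤ) ≤ (n:ℤ) - 1 := by omega
    have h0 : (0:ℤ) ≤ (j.natAbs : ℤ) := by positivity
    rw [_root_.abs_of_nonneg (by nlinarith)]
    nlinarith
  · have h1 : (n:ℤ) + 1 ≤ (j.natAbs : ℤ) := by omega
    rw [_root_.abs_of_nonpos (by nlinarith)]
    nlinarith

lemma denom_lb {n : ℕ} (hn : 1 ≤ n) {j : ℤ} (h1 : j ≠ (n:ℤ)) (h2 : j ≠ -(n:ℤ))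
    {z : ℂ} (hz : ‖z‖ ≤ 1) : 2*(n:ℝ) - 2 ≤ ‖(n:ℂ)^2 - (j:ℂ)^2 + z‖ := by
  have h3 : ((n:ℤ)^2 - j^2 : ℤ) = ((n:ℂ)^2 - (j:ℂ)^2 : ℂ) → True := fun _ => trivial
  have key : ‖(n:ℂ)^2 - (j:ℂ)^2‖ = |((n:ℤ)^2 - j^2 : ℤ)| := by
    rw [show ((n:ℂ)^2 - (j:ℂ)^2 : ℂ) = (((n:ℤ)^2 - j^2 : ℤ) : ℂ) by push_cast; ring,
      Complex.norm_intCast]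
    norm_cast
  have hint := int_denom_lb hn h1 h2
  have hreal : 2*(n:ℝ) - 1 ≤ ‖(n:ℂ)^2 - (j:ℂ)^2‖ := by
    rw [key]
    have : ((2*(n:ℤ) - 1 : ℤ) : ℝ) ≤ ((|(n:ℤ)^2 - j^2| : ℤ) : ℝ) := by exact_mod_cast hint
    push_cast at this ⊢
    linarith
  calc 2*(n:ℝ) - 2 ≤ ‖(n:ℂ)^2 - (j:ℂ)^2‖ - ‖z‖ := by linarith
    _ ≤ ‖(n:ℂ)^2 - (j:ℂ)^2 + z‖ := by
        have h4 : ‖((n:ℂ)^2-(j:ℂ)^2+z) - z‖ ≤ ‖(n:ℂ)^2-(j:ℂ)^2+z‖ + ‖z‖ := norm_sub_le _ _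
        have h5 : ((n:ℂ)^2-(j:ℂ)^2+z) - z = (n:ℂ)^2-(j:ℂ)^2 := by ring
        rw [h5] at h4
        linarith

section structure_lemmas
variable {a : ℂ} {n : ℕ} {z : ℂ} {p : ℕ} {j : Fin p → {m : ℤ // m ≠ (n : ℤ) ∧ m ≠ -(n : ℤ)}}

lemma Sterm_num_ne_zero (h : Sterm (mathieuV a) n z (n:ℤ) (n:ℤ) p j ≠ 0) :
    ∀ i ∈ Finset.range (p+1),
      mathieuV a (extWalk (n:ℤ) (n:ℤ) p (fun s => (j s : ℤ)) (i+1)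
        - extWalk (n:ℤ) (n:ℤ) p (fun s => (j s : ℤ)) i) ≠ 0 := by
  intro i hi
  have hnum : (∏ i ∈ Finset.range (p + 1),
      mathieuV a (extWalk (n:ℤ) (n:ℤ) p (fun s => (j s : ℤ)) (i + 1)
        - extWalk (n:ℤ) (n:ℤ) p (fun s => (j s : ℤ)) i)) ≠ 0 := by
    intro hz0
    apply h
    unfold Sterm
    rw [hz0, zero_div]
  exact Finset.prod_ne_zero_iff.mp hnum i hi

lemma Sterm_diffs (h : Sterm (mathieuV a) n z (n:ℤ) (n:ℤ) p j ≠ 0) :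
    ∀ i ∈ Finset.range (p+1),
      extWalk (n:ℤ) (n:ℤ) p (fun s => (j s : ℤ)) (i+1)
        - extWalk (n:ℤ) (n:ℤ) p (fun s => (j s : ℤ)) i = 2 ∨
      extWalk (n:ℤ) (n:ℤ) p (fun s => (j s : ℤ)) (i+1)
        - extWalk (n:ℤ) (n:ℤ) p (fun s => (j s : ℤ)) i = -2 := by
  intro i hi
  exact mathieuV_ne_zero (Sterm_num_ne_zero h i hi)

lemma Sterm_odd (h : Sterm (mathieuV a) n z (n:ℤ) (n:ℤ) p j ≠ 0) : p % 2 = 1 := by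
  set w := extWalk (n:ℤ) (n:ℤ) p (fun s => (j s : ℤ)) with hw
  have hsum : ∑ i ∈ Finset.range (p+1), (w (i+1) - w i) = 0 := by
    rw [Finset.sum_range_sub w (p+1)]
    rw [hw, extWalk_last, extWalk_zero]
    ring
  have hdvd : (4:ℤ) ∣ ∑ i ∈ Finset.range (p+1), ((w (i+1) - w i) - 2) :=
    Finset.dvd_sum (fun i hi => by
      rcases Sterm_diffs h i hi with h2 | h2 <;> rw [← hw] at h2 <;> rw [h2] <;> norm_num)
  rw [Finset.sum_sub_distrib, hsum, Finset.sum_const, Finset.card_range] at hdvd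
  simp only [nsmul_eq_mul, zero_sub, dvd_neg] at hdvd
  push_cast at hdvd
  omega

end structure_lemmas

section count
variable {a : ℂ} {n : ℕ} {z : ℂ} {p : ℕ}

lemma Sterm_tuple_eq {j j' : Fin p → {m : ℤ // m ≠ (n : ℤ) ∧ m ≠ -(n : ℤ)}}
    (h : Sterm (mathieuV a) n z (n:ℤ) (n:ℤ) p j ≠ 0)
    (h' : Sterm (mathieuV a) n z (n:ℤ) (n:ℤ) p j' ≠ 0)
    (hs : ∀ i : Fin p,
      (0 < extWalk (n:ℤ) (n:ℤ) p (fun s => (j s : ℤ)) ((i:ℕ)+1)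
          - extWalk (n:ℤ) (n:ℤ) p (fun s => (j s : ℤ)) (i:ℕ) ↔
       0 < extWalk (n:ℤ) (n:ℤ) p (fun s => (j' s : ℤ)) ((i:ℕ)+1)
          - extWalk (n:ℤ) (n:ℤ) p (fun s => (j' s : ℤ)) (i:ℕ))) : j = j' := by
  set w := extWalk (n:ℤ) (n:ℤ) p (fun s => (j s : ℤ)) with hw
  set w' := extWalk (n:ℤ) (n:ℤ) p (fun s => (j' s : ℤ)) with hw'
  have key : ∀ i, i ≤ p → w i = w' i := by
    intro i
    induction i with
    | zero => intro _; rw [hw, hw', extWalk_zero, extWalk_zero]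
    | succ i ih =>
      intro hip
      have hi : i ≤ p := by omega
      have hieq := ih hi
      have hmem : i ∈ Finset.range (p+1) := Finset.mem_range.mpr (by omega)
      have hd := Sterm_diffs h i hmem
      have hd' := Sterm_diffs h' i hmem
      rw [← hw] at hd
      rw [← hw'] at hd'
      have hsi := hs ⟨i, by omega⟩
      simp only at hsi
      have : w (i+1) - w i = w' (i+1) - w' i := by
        rcases hd with h2 | h2 <;> rcases hd' with h2' | h2'
        · rw [h2, h2']
        · exfalso; rw [h2, h2'] at hsi; norm_num at hsi
        · exfalso; rw [h2, h2'] at hsi; norm_num at hsi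
        · rw [h2, h2']
      omega
  funext s
  apply Subtype.ext
  have h1 : (j s : ℤ) = w ((s:ℕ)+1) := by rw [hw, extWalk_mid]
  have h2 : (j' s : ℤ) = w' ((s:ℕ)+1) := by rw [hw', extWalk_mid]
  rw [h1, h2, key ((s:ℕ)+1) (by omega)]

lemma Sterm_support_finite :
    (Function.support (fun j : Fin p → {m : ℤ // m ≠ (n : ℤ) ∧ m ≠ -(n : ℤ)} =>
      Sterm (mathieuV a) n z (n:ℤ) (n:ℤ) p j)).Finite := by
  set g := fun j : Fin p → {m : ℤ // m ≠ (n : ℤ) ∧ m ≠ -(n : ℤ)} =>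
      Sterm (mathieuV a) n z (n:ℤ) (n:ℤ) p j with hg
  set sgn := fun (j : Fin p → {m : ℤ // m ≠ (n : ℤ) ∧ m ≠ -(n : ℤ)}) (i : Fin p) =>
      decide (0 < extWalk (n:ℤ) (n:ℤ) p (fun s => (j s : ℤ)) ((i:ℕ)+1)
          - extWalk (n:ℤ) (n:ℤ) p (fun s => (j s : ℤ)) (i:ℕ)) with hsgn
  have hinj : Set.InjOn sgn (Function.support g) := by
    intro j hj j' hj' heq
    apply Sterm_tuple_eq hj hj'
    intro i
    have := congrFun heq i
    simp only [hsgn, decide_eq_decide] at this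
    exact this
  exact Set.Finite.of_finite_image (Set.toFinite _) hinj

end count

section bounds
variable {a : ℂ} {n : ℕ} {z : ℂ} {p : ℕ}

lemma Sterm_norm_le (hn : 2 ≤ n) (hz : ‖z‖ ≤ 1)
    (j : Fin p → {m : ℤ // m ≠ (n : ℤ) ∧ m ≠ -(n : ℤ)}) :
    ‖Sterm (mathieuV a) n z (n:ℤ) (n:ℤ) p j‖ ≤ ‖a‖^(p+1) / (2*(n:ℝ)-2)^p := by
  have hn2 : (2:ℝ) ≤ (n:ℝ) := by exact_mod_cast hn
  have hden0 : (0:ℝ) < 2*(n:ℝ)-2 := by linarith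
  unfold Sterm
  rw [norm_div, norm_prod, norm_prod]
  apply div_le_div₀ (by positivity) ?_ (pow_pos hden0 p) ?_
  · calc (∏ i ∈ Finset.range (p + 1), ‖mathieuV a _‖)
        ≤ ∏ i ∈ Finset.range (p + 1), ‖a‖ :=
          Finset.prod_le_prod (fun _ _ => norm_nonneg _) (fun i _ => norm_mathieuV_le a _)
      _ = ‖a‖^(p+1) := by rw [Finset.prod_const, Finset.card_range]
  · calc (2*(n:ℝ)-2)^p = ∏ _s : Fin p, (2*(n:ℝ)-2) := by
          rw [Finset.prod_const, Finset.card_univ, Fintype.card_fin]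
      _ ≤ ∏ s : Fin p, ‖(n:ℂ)^2 - ((j s : ℤ):ℂ)^2 + z‖ :=
          Finset.prod_le_prod (fun _ _ => le_of_lt hden0)
            (fun s _ => denom_lb (by omega) (j s).2.1 (j s).2.2 hz)

lemma Acoef_norm_le (hn : 2 ≤ n) (hz : ‖z‖ ≤ 1) :
    ‖Acoef a n z p‖ ≤ 2^p * (‖a‖^(p+1) / (2*(n:ℝ)-2)^p) := by
  classical
  have hfin := Sterm_support_finite (a := a) (n := n) (z := z) (p := p)
  unfold Acoef
  rw [tsum_eq_sum (s := hfin.toFinset) (fun b hb => by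
    rw [Set.Finite.mem_toFinset] at hb
    exact Function.notMem_support.mp hb)]
  have hB : (0:ℝ) ≤ ‖a‖^(p+1) / (2*(n:ℝ)-2)^p := by
    have hn2 : (2:ℝ) ≤ (n:ℝ) := by exact_mod_cast hn
    have hden0 : (0:ℝ) < 2*(n:ℝ)-2 := by linarith
    positivity
  have hcard : hfin.toFinset.card ≤ 2^p := by
    set sgn := fun (j : Fin p → {m : ℤ // m ≠ (n : ℤ) ∧ m ≠ -(n : ℤ)}) (i : Fin p) =>
        decide (0 < extWalk (n:ℤ) (n:ℤ) p (fun s => (j s : ℤ)) ((i:ℕ)+1)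
            - extWalk (n:ℤ) (n:ℤ) p (fun s => (j s : ℤ)) (i:ℕ)) with hsgn
    have := Finset.card_le_card_of_injOn (s := hfin.toFinset)
      (t := (Finset.univ : Finset (Fin p → Bool))) sgn
      (fun j _ => Finset.mem_univ _)
      (by
        intro j hj j' hj' heq
        rw [Set.Finite.coe_toFinset] at hj hj'
        rw [Function.mem_support] at hj hj'
        apply Sterm_tuple_eq hj hj'
        intro i
        have := congrFun heq i
        simp only [hsgn, decide_eq_decide] at this
        exact this)
    simpa using this
  calc ‖∑ b ∈ hfin.toFinset, Sterm (mathieuV a) n z (n:ℤ) (n:ℤ) p b‖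
      ≤ ∑ b ∈ hfin.toFinset, ‖Sterm (mathieuV a) n z (n:ℤ) (n:ℤ) p b‖ := norm_sum_le _ _
    _ ≤ hfin.toFinset.card • (‖a‖^(p+1) / (2*(n:ℝ)-2)^p) :=
        Finset.sum_le_card_nsmul _ _ _ (fun x _ => Sterm_norm_le hn hz x)
    _ ≤ 2^p * (‖a‖^(p+1) / (2*(n:ℝ)-2)^p) := by
        rw [nsmul_eq_mul]
        apply mul_le_mul_of_nonneg_right _ hB
        exact_mod_cast hcard

end bounds

section explicit
variable {a : ℂ} {n : ℕ} {z : ℂ} {p : ℕ}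

lemma Acoef_even_zero (hp : p % 2 = 0) : Acoef a n z p = 0 := by
  have hz0 : ∀ j : Fin p → {m : ℤ // m ≠ (n : ℤ) ∧ m ≠ -(n : ℤ)},
      Sterm (mathieuV a) n z (n:ℤ) (n:ℤ) p j = 0 := fun j => by
    by_contra h
    have := Sterm_odd h
    omega
  unfold Acoef
  simp [hz0]

lemma Acoef_one (hn : 2 ≤ n) :
    Acoef a n z 1 = a^2 / ((n:ℂ)^2 - ((n:ℂ)+2)^2 + z) + a^2 / ((n:ℂ)^2 - ((n:ℂ)-2)^2 + z) := by
  classical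
  have hmem1 : ((n:ℤ)+2 ≠ (n:ℤ) ∧ (n:ℤ)+2 ≠ -(n:ℤ)) := by omega
  have hmem2 : ((n:ℤ)-2 ≠ (n:ℤ) ∧ (n:ℤ)-2 ≠ -(n:ℤ)) := by omega
  set t1 : Fin 1 → {m : ℤ // m ≠ (n : ℤ) ∧ m ≠ -(n : ℤ)} := fun _ => ⟨(n:ℤ)+2, hmem1⟩ with ht1
  set t2 : Fin 1 → {m : ℤ // m ≠ (n : ℤ) ∧ m ≠ -(n : ℤ)} := fun _ => ⟨(n:ℤ)-2, hmem2⟩ with ht2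
  have hne : t1 ≠ t2 := by
    intro h
    have := congrFun h 0
    rw [ht1, ht2] at this
    simp only [Subtype.mk.injEq] at this
    omega
  unfold Acoef
  rw [tsum_eq_sum (s := {t1, t2}) ?_]
  · rw [Finset.sum_pair hne]
    have eval : ∀ (c : ℤ) (hc : c ≠ (n:ℤ) ∧ c ≠ -(n:ℤ)),
        Sterm (mathieuV a) n z (n:ℤ) (n:ℤ) 1 (fun _ => ⟨c, hc⟩) =
          (mathieuV a (c - n) * mathieuV a ((n:ℤ) - c)) / ((n:ℂ)^2 - (c:ℂ)^2 + z) := by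
      intro c hc
      unfold Sterm
      have e0 := extWalk_zero (n:ℤ) (n:ℤ) 1 (fun _ => c)
      have e2 := extWalk_last (n:ℤ) (n:ℤ) 1 (fun _ => c)
      have e1 : extWalk (n:ℤ) (n:ℤ) 1 (fun _ => c) 1 = c := by
        simpa using extWalk_mid (n:ℤ) (n:ℤ) 1 (fun _ => c) 0
      rw [show (fun s : Fin 1 => (((fun _ => (⟨c, hc⟩ : {m : ℤ // m ≠ (n : ℤ) ∧ m ≠ -(n : ℤ)})) s : ℤ))) = (fun _ : Fin 1 => c) from rfl]
      rw [Finset.prod_range_succ, Finset.prod_range_succ, Finset.prod_range_zero, one_mul]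
      rw [e0, e1, e2, Fin.prod_univ_one]
    rw [ht1, ht2, eval, eval]
    have v2 : mathieuV a (((n:ℤ)+2) - n) = a := by norm_num [mathieuV]
    have v2' : mathieuV a ((n:ℤ) - ((n:ℤ)+2)) = a := by norm_num [mathieuV]
    have v3 : mathieuV a (((n:ℤ)-2) - n) = a := by norm_num [mathieuV]
    have v3' : mathieuV a ((n:ℤ) - ((n:ℤ)-2)) = a := by norm_num [mathieuV]
    rw [v2, v2', v3, v3']
    push_cast
    ring
  · intro jj hjj
    by_contra hne0
    have hd := Sterm_diffs hne0 0 (Finset.mem_range.mpr (by omega))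
    have e0 := extWalk_zero (n:ℤ) (n:ℤ) 1 (fun s => (jj s : ℤ))
    have e1 : extWalk (n:ℤ) (n:ℤ) 1 (fun s => (jj s : ℤ)) 1 = (jj 0 : ℤ) := by
      simpa using extWalk_mid (n:ℤ) (n:ℤ) 1 (fun s => (jj s : ℤ)) 0
    rw [show (0:ℕ)+1 = 1 from rfl, e0, e1] at hd
    apply hjj
    simp only [Finset.mem_insert, Finset.mem_singleton]
    rcases hd with h2 | h2
    · left
      funext s
      rw [Subsingleton.elim s 0]
      apply Subtype.ext
      rw [ht1]
      simp only
      omega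
    · right
      funext s
      rw [Subsingleton.elim s 0]
      apply Subtype.ext
      rw [ht2]
      simp only
      omega

end explicit

section explicit3
variable {a : ℂ} {n : ℕ} {z : ℂ}

lemma Sterm_three_eval (n : ℕ) (z : ℂ) (c : Fin 3 → ℤ) (hc : ∀ s, c s ≠ (n:ℤ) ∧ c s ≠ -(n:ℤ)) :
    Sterm (mathieuV a) n z (n:ℤ) (n:ℤ) 3 (fun s => ⟨c s, hc s⟩) =
      (mathieuV a (c 0 - n) * mathieuV a (c 1 - c 0) * mathieuV a (c 2 - c 1)
          * mathieuV a ((n:ℤ) - c 2)) /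
        (((n:ℂ)^2 - ((c 0 : ℤ):ℂ)^2 + z) * ((n:ℂ)^2 - ((c 1 : ℤ):ℂ)^2 + z)
          * ((n:ℂ)^2 - ((c 2 : ℤ):ℂ)^2 + z)) := by
  unfold Sterm
  rw [show (fun s : Fin 3 => (((fun s => (⟨c s, hc s⟩ : {m : ℤ // m ≠ (n : ℤ) ∧ m ≠ -(n : ℤ)})) s : ℤ))) = c from rfl]
  have e0 := extWalk_zero (n:ℤ) (n:ℤ) 3 c
  have e4 := extWalk_last (n:ℤ) (n:ℤ) 3 c
  have e1 : extWalk (n:ℤ) (n:ℤ) 3 c 1 = c 0 := by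
    simpa using extWalk_mid (n:ℤ) (n:ℤ) 3 c 0
  have e2 : extWalk (n:ℤ) (n:ℤ) 3 c 2 = c 1 := by
    simpa using extWalk_mid (n:ℤ) (n:ℤ) 3 c 1
  have e3 : extWalk (n:ℤ) (n:ℤ) 3 c 3 = c 2 := by
    simpa using extWalk_mid (n:ℤ) (n:ℤ) 3 c 2
  rw [Finset.prod_range_succ, Finset.prod_range_succ, Finset.prod_range_succ,
    Finset.prod_range_succ, Finset.prod_range_zero, one_mul]
  rw [Fin.prod_univ_three]
  norm_num [e0, e1, e2, e3, e4]

set_option maxHeartbeats 1000000 in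
lemma Acoef_three (hn : 5 ≤ n) :
    Acoef a n z 3 =
      a^4 / (((n:ℂ)^2 - ((n:ℂ)+2)^2 + z)^2 * ((n:ℂ)^2 - ((n:ℂ)+4)^2 + z))
      + a^4 / (((n:ℂ)^2 - ((n:ℂ)-2)^2 + z)^2 * ((n:ℂ)^2 - ((n:ℂ)-4)^2 + z)) := by
  classical
  set c1 : Fin 3 → ℤ := fun s => if s = 1 then (n:ℤ)+4 else (n:ℤ)+2 with hc1
  set c2 : Fin 3 → ℤ := fun s => if s = 1 then (n:ℤ)-4 else (n:ℤ)-2 with hc2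
  have hm1 : ∀ s, c1 s ≠ (n:ℤ) ∧ c1 s ≠ -(n:ℤ) := fun s => by
    rw [hc1]; by_cases h : s = 1 <;> simp [h] <;> omega
  have hm2 : ∀ s, c2 s ≠ (n:ℤ) ∧ c2 s ≠ -(n:ℤ) := fun s => by
    rw [hc2]; by_cases h : s = 1 <;> simp [h] <;> omega
  set t1 : Fin 3 → {m : ℤ // m ≠ (n : ℤ) ∧ m ≠ -(n : ℤ)} := fun s => ⟨c1 s, hm1 s⟩ with ht1
  set t2 : Fin 3 → {m : ℤ // m ≠ (n : ℤ) ∧ m ≠ -(n : ℤ)} := fun s => ⟨c2 s, hm2 s⟩ with ht2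
  have hne : t1 ≠ t2 := by
    intro h
    have := congrFun h 0
    rw [ht1, ht2] at this
    simp only [Subtype.mk.injEq, hc1, hc2] at this
    norm_num at this
    omega
  have hv1 : c1 0 = (n:ℤ)+2 := if_neg (by decide)
  have hv2 : c1 1 = (n:ℤ)+4 := if_pos (by decide)
  have hv3 : c1 2 = (n:ℤ)+2 := if_neg (by decide)
  have hw1 : c2 0 = (n:ℤ)-2 := if_neg (by decide)
  have hw2 : c2 1 = (n:ℤ)-4 := if_pos (by decide)
  have hw3 : c2 2 = (n:ℤ)-2 := if_neg (by decide)
  unfold Acoef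
  rw [tsum_eq_sum (s := {t1, t2}) ?_]
  · rw [Finset.sum_pair hne, ht1, ht2, Sterm_three_eval n z c1 hm1, Sterm_three_eval n z c2 hm2]
    rw [hv1, hv2, hv3, hw1, hw2, hw3]
    have V1 : mathieuV a (((n:ℤ)+2) - n) = a := by norm_num [mathieuV]
    have V2 : mathieuV a (((n:ℤ)+4) - ((n:ℤ)+2)) = a := by norm_num [mathieuV]
    have V3 : mathieuV a (((n:ℤ)+2) - ((n:ℤ)+4)) = a := by norm_num [mathieuV]
    have V4 : mathieuV a ((n:ℤ) - ((n:ℤ)+2)) = a := by norm_num [mathieuV]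
    have W1 : mathieuV a (((n:ℤ)-2) - n) = a := by norm_num [mathieuV]
    have W2 : mathieuV a (((n:ℤ)-4) - ((n:ℤ)-2)) = a := by norm_num [mathieuV]
    have W3 : mathieuV a (((n:ℤ)-2) - ((n:ℤ)-4)) = a := by norm_num [mathieuV]
    have W4 : mathieuV a ((n:ℤ) - ((n:ℤ)-2)) = a := by norm_num [mathieuV]
    rw [V1, V2, V3, V4, W1, W2, W3, W4]
    push_cast
    ring
  · intro jj hjj
    by_contra hne0
    have hd0 := Sterm_diffs hne0 0 (Finset.mem_range.mpr (by omega))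
    have hd1 := Sterm_diffs hne0 1 (Finset.mem_range.mpr (by omega))
    have hd2 := Sterm_diffs hne0 2 (Finset.mem_range.mpr (by omega))
    have hd3 := Sterm_diffs hne0 3 (Finset.mem_range.mpr (by omega))
    have e0 := extWalk_zero (n:ℤ) (n:ℤ) 3 (fun s => (jj s : ℤ))
    have e4 := extWalk_last (n:ℤ) (n:ℤ) 3 (fun s => (jj s : ℤ))
    have e1 : extWalk (n:ℤ) (n:ℤ) 3 (fun s => (jj s : ℤ)) 1 = (jj 0 : ℤ) := by
      simpa using extWalk_mid (n:ℤ) (n:ℤ) 3 (fun s => (jj s : ℤ)) 0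
    have e2 : extWalk (n:ℤ) (n:ℤ) 3 (fun s => (jj s : ℤ)) 2 = (jj 1 : ℤ) := by
      simpa using extWalk_mid (n:ℤ) (n:ℤ) 3 (fun s => (jj s : ℤ)) 1
    have e3 : extWalk (n:ℤ) (n:ℤ) 3 (fun s => (jj s : ℤ)) 3 = (jj 2 : ℤ) := by
      simpa using extWalk_mid (n:ℤ) (n:ℤ) 3 (fun s => (jj s : ℤ)) 2
    rw [show (0:ℕ)+1 = 1 from rfl, e0, e1] at hd0
    rw [show (1:ℕ)+1 = 2 from rfl, e1, e2] at hd1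
    rw [show (2:ℕ)+1 = 3 from rfl, e2, e3] at hd2
    rw [show (3:ℕ)+1 = 4 from rfl, e3, e4] at hd3
    have hq0 := (jj 0).2
    have hq1 := (jj 1).2
    have hq2 := (jj 2).2
    apply hjj
    simp only [Finset.mem_insert, Finset.mem_singleton]
    have hcase : ((jj 0 : ℤ) = (n:ℤ)+2 ∧ (jj 1 : ℤ) = (n:ℤ)+4 ∧ (jj 2 : ℤ) = (n:ℤ)+2)
        ∨ ((jj 0 : ℤ) = (n:ℤ)-2 ∧ (jj 1 : ℤ) = (n:ℤ)-4 ∧ (jj 2 : ℤ) = (n:ℤ)-2) := by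
      clear_value t1 t2 c1 c2
      clear hne0 hjj e0 e1 e2 e3 e4 hne ht1 ht2 hv1 hv2 hv3 hw1 hw2 hw3 hm1 hm2 hc1 hc2 t1 t2 c1 c2
      omega
    rcases hcase with ⟨ha0, ha1, ha2⟩ | ⟨ha0, ha1, ha2⟩
    · left
      rw [ht1]
      funext s
      apply Subtype.ext
      fin_cases s
      · show (jj 0 : ℤ) = c1 0; rw [hv1]; exact ha0
      · show (jj 1 : ℤ) = c1 1; rw [hv2]; exact ha1
      · show (jj 2 : ℤ) = c1 2; rw [hv3]; exact ha2
    · right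
      rw [ht2]
      funext s
      apply Subtype.ext
      fin_cases s
      · show (jj 0 : ℤ) = c2 0; rw [hw1]; exact ha0
      · show (jj 1 : ℤ) = c2 1; rw [hw2]; exact ha1
      · show (jj 2 : ℤ) = c2 2; rw [hw3]; exact ha2

end explicit3

section estimates

lemma est1 (a : ℂ) (M : ℝ) (hM : 0 < M) (n : ℕ) (z : ℂ)
    (hn4 : M + 4 ≤ (n:ℝ)) (hz : ‖z‖ ≤ M / (n:ℝ)^2) :
    ‖a^2 / ((n:ℂ)^2 - ((n:ℂ)+2)^2 + z) + a^2 / ((n:ℂ)^2 - ((n:ℂ)-2)^2 + z)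
      - a^2/(2*(n:ℂ)^2)‖ ≤ (‖a‖^2 * (4*M + (M+4)^2) / 16) / (n:ℝ)^4 := by
  have hn1 : (1:ℝ) ≤ (n:ℝ) := by linarith
  have hn0 : (0:ℝ) < (n:ℝ) := by linarith
  have hnn : 0 < n := by exact_mod_cast hn0
  have hnC : ((n:ℂ)) ≠ 0 := Nat.cast_ne_zero.mpr hnn.ne'
  have hn2 : (1:ℝ) ≤ (n:ℝ)^2 := by nlinarith
  have hzM : ‖z‖ ≤ M := le_trans hz (by
    rw [div_le_iff₀ (by positivity)]
    nlinarith)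
  have hz4 : ‖z - 4‖ ≤ M + 4 := by
    calc ‖z - 4‖ ≤ ‖z‖ + ‖(4:ℂ)‖ := norm_sub_le _ _
      _ ≤ M + 4 := by rw [show ‖(4:ℂ)‖ = 4 by norm_num]; linarith
  set W : ℂ := (z-4)^2 - 16*(n:ℂ)^2 with hW
  have hWlb : 8*(n:ℝ)^2 ≤ ‖W‖ := by
    have h1 : ‖(16:ℂ)*(n:ℂ)^2‖ - ‖(z-4)^2‖ ≤ ‖(16:ℂ)*(n:ℂ)^2 - (z-4)^2‖ :=
      norm_sub_norm_le _ _
    have h2 : ‖(16:ℂ)*(n:ℂ)^2 - (z-4)^2‖ = ‖W‖ := by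
      rw [hW, ← norm_neg]; congr 1; ring
    have h3 : ‖(16:ℂ)*(n:ℂ)^2‖ = 16*(n:ℝ)^2 := by
      rw [norm_mul, norm_pow, Complex.norm_natCast]; norm_num
    have h4 : ‖(z-4)^2‖ ≤ (M+4)^2 := by
      rw [norm_pow]
      exact pow_le_pow_left₀ (norm_nonneg _) hz4 2
    nlinarith
  have hWne : W ≠ 0 := by
    intro h
    rw [h, norm_zero] at hWlb
    nlinarith
  set D1 : ℂ := (n:ℂ)^2 - ((n:ℂ)+2)^2 + z with hD1
  set D2 : ℂ := (n:ℂ)^2 - ((n:ℂ)-2)^2 + z with hD2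
  have hprod : D1 * D2 = W := by rw [hD1, hD2, hW]; ring
  have hD1ne : D1 ≠ 0 := fun h => hWne (by rw [← hprod, h, zero_mul])
  have hD2ne : D2 ≠ 0 := fun h => hWne (by rw [← hprod, h, mul_zero])
  have h2n2 : (2:ℂ)*(n:ℂ)^2 ≠ 0 := by
    apply mul_ne_zero (by norm_num) (pow_ne_zero _ hnC)
  have hsum2 : a^2*D2 + D1*a^2 = a^2*(2*z-8) := by rw [hD1, hD2]; ring
  have hid : a^2 / D1 + a^2 / D2 - a^2/(2*(n:ℂ)^2)
      = a^2 * (4*(n:ℂ)^2*z - (z-4)^2) / (2*(n:ℂ)^2 * W) := by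
    rw [div_add_div _ _ hD1ne hD2ne, hprod, hsum2,
      div_sub_div _ _ hWne h2n2,
      div_eq_div_iff (mul_ne_zero hWne h2n2) (mul_ne_zero h2n2 hWne), hW]
    ring
  rw [hid]
  rw [norm_div, norm_mul, norm_mul, norm_pow]
  have hnum : ‖4*(n:ℂ)^2*z - (z-4)^2‖ ≤ 4*M + (M+4)^2 := by
    calc ‖4*(n:ℂ)^2*z - (z-4)^2‖ ≤ ‖4*(n:ℂ)^2*z‖ + ‖(z-4)^2‖ := norm_sub_le _ _
      _ ≤ 4*(n:ℝ)^2*(M/(n:ℝ)^2) + (M+4)^2 := by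
          rw [norm_mul, norm_mul, norm_pow, Complex.norm_natCast, norm_pow]
          have h4 : ‖(4:ℂ)‖ = 4 := by norm_num
          rw [h4]
          have := pow_le_pow_left₀ (norm_nonneg _) hz4 2
          have hmul : 4*(n:ℝ)^2*‖z‖ ≤ 4*(n:ℝ)^2*(M/(n:ℝ)^2) := by
            apply mul_le_mul_of_nonneg_left hz (by positivity)
          linarith
      _ = 4*M + (M+4)^2 := by field_simp
  have hden : 16*(n:ℝ)^4 ≤ ‖(2:ℂ)*(n:ℂ)^2‖ * ‖W‖ := by
    have h5 : ‖(2:ℂ)*(n:ℂ)^2‖ = 2*(n:ℝ)^2 := by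
      rw [norm_mul, norm_pow, Complex.norm_natCast]; norm_num
    rw [h5]
    nlinarith
  calc ‖a‖^2 * ‖4*(n:ℂ)^2*z - (z-4)^2‖ / (‖(2:ℂ)*(n:ℂ)^2‖ * ‖W‖)
      ≤ ‖a‖^2 * (4*M + (M+4)^2) / (16*(n:ℝ)^4) := by
        apply div_le_div₀ (by positivity)
          (mul_le_mul_of_nonneg_left hnum (by positivity)) (by positivity) hden
    _ = (‖a‖^2 * (4*M + (M+4)^2) / 16) / (n:ℝ)^4 := by ring

end estimates

lemma norm_add_lower (z c : ℂ) : ‖c‖ - ‖z‖ ≤ ‖z + c‖ := by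
  have h := norm_sub_le (z + c) z
  have h2 : z + c - z = c := by ring
  rw [h2] at h
  linarith

lemma est3 (a : ℂ) (M : ℝ) (hM : 0 < M) (n : ℕ) (z : ℂ)
    (hn4 : M + 4 ≤ (n:ℝ)) (hn17 : (17:ℝ) ≤ (n:ℝ)) (hz : ‖z‖ ≤ M / (n:ℝ)^2) :
    ‖a^4 / (((n:ℂ)^2 - ((n:ℂ)+2)^2 + z)^2 * ((n:ℂ)^2 - ((n:ℂ)+4)^2 + z))
      + a^4 / (((n:ℂ)^2 - ((n:ℂ)-2)^2 + z)^2 * ((n:ℂ)^2 - ((n:ℂ)-4)^2 + z))‖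
      ≤ (‖a‖^4 * (2*(M+4)^2*(M+16) + 160*M + 1024) / 729) / (n:ℝ)^4 := by
  have hn0 : (0:ℝ) < (n:ℝ) := by linarith
  have hnn : 0 < n := by exact_mod_cast hn0
  have hnC : ((n:ℂ)) ≠ 0 := Nat.cast_ne_zero.mpr hnn.ne'
  have hn2 : (1:ℝ) ≤ (n:ℝ)^2 := by nlinarith
  have hz1 : ‖z‖ ≤ 1 := by
    calc ‖z‖ ≤ M / (n:ℝ)^2 := hz
      _ ≤ 1 := by rw [div_le_one (by positivity)]; nlinarith
  have hzM : ‖z‖ ≤ M := le_trans hz (by rw [div_le_iff₀ (by positivity)]; nlinarith)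
  set D1 : ℂ := (n:ℂ)^2 - ((n:ℂ)+2)^2 + z with hD1
  set E1 : ℂ := (n:ℂ)^2 - ((n:ℂ)+4)^2 + z with hE1
  set D2 : ℂ := (n:ℂ)^2 - ((n:ℂ)-2)^2 + z with hD2
  set E2 : ℂ := (n:ℂ)^2 - ((n:ℂ)-4)^2 + z with hE2
  -- lower bounds
  have lb : ∀ (X : ℂ) (c : ℝ), X = z + (c:ℂ) → 3*(n:ℝ)+1 ≤ |c| - ‖z‖ →
      3*(n:ℝ) + 1 ≤ ‖X‖ := by
    intro X c hXe hc
    rw [hXe]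
    have := norm_add_lower z (c:ℂ)
    rw [Complex.norm_real, Real.norm_eq_abs] at this
    linarith
  have hD1lb : 3*(n:ℝ)+1 ≤ ‖D1‖ := by
    apply lb D1 (-4*(n:ℝ)-4)
    · rw [hD1]; push_cast; ring
    · rw [_root_.abs_of_nonpos (by linarith)]; linarith
  have hD2lb : 3*(n:ℝ)+1 ≤ ‖D2‖ := by
    apply lb D2 (4*(n:ℝ)-4)
    · rw [hD2]; push_cast; ring
    · rw [_root_.abs_of_nonneg (by linarith)]; linarith
  have hE1lb : 3*(n:ℝ)+1 ≤ ‖E1‖ := by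
    apply lb E1 (-8*(n:ℝ)-16)
    · rw [hE1]; push_cast; ring
    · rw [_root_.abs_of_nonpos (by linarith)]; linarith
  have hE2lb : 3*(n:ℝ)+1 ≤ ‖E2‖ := by
    apply lb E2 (8*(n:ℝ)-16)
    · rw [hE2]; push_cast; ring
    · rw [_root_.abs_of_nonneg (by linarith)]; linarith
  have hD1ne : D1 ≠ 0 := fun h => by rw [h, norm_zero] at hD1lb; linarith
  have hD2ne : D2 ≠ 0 := fun h => by rw [h, norm_zero] at hD2lb; linarith
  have hE1ne : E1 ≠ 0 := fun h => by rw [h, norm_zero] at hE1lb; linarith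
  have hE2ne : E2 ≠ 0 := fun h => by rw [h, norm_zero] at hE2lb; linarith
  have h1ne : D1^2 * E1 ≠ 0 := mul_ne_zero (pow_ne_zero _ hD1ne) hE1ne
  have h2ne : D2^2 * E2 ≠ 0 := mul_ne_zero (pow_ne_zero _ hD2ne) hE2ne
  set S : ℂ := 2*((z-4)^2*(z-16) + 16*(n:ℂ)^2*(5*z-32)) with hS
  have hid : a^4 / (D1^2 * E1) + a^4 / (D2^2 * E2)
      = a^4 * S / (D1^2 * E1 * (D2^2 * E2)) := by
    rw [div_add_div _ _ h1ne h2ne]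
    congr 1
    rw [hD1, hD2, hE1, hE2, hS]
    ring
  rw [hid, norm_div, norm_mul]
  have hnormden : ‖D1^2 * E1 * (D2^2 * E2)‖ = ‖D1‖^2*‖E1‖*(‖D2‖^2*‖E2‖) := by
    rw [norm_mul, norm_mul, norm_mul, norm_pow, norm_pow]
  rw [hnormden]
  have hna : ‖a^4‖ = ‖a‖^4 := norm_pow a 4
  rw [hna]
  set K : ℝ := 2*(M+4)^2*(M+16) + 160*M + 1024 with hK
  have hSbound : ‖S‖ ≤ K * (n:ℝ)^2 := by
    have hz4 : ‖z - 4‖ ≤ M + 4 := by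
      calc ‖z - 4‖ ≤ ‖z‖ + ‖(4:ℂ)‖ := norm_sub_le _ _
        _ ≤ M + 4 := by rw [show ‖(4:ℂ)‖ = 4 by norm_num]; linarith
    have hz16 : ‖z - 16‖ ≤ M + 16 := by
      calc ‖z - 16‖ ≤ ‖z‖ + ‖(16:ℂ)‖ := norm_sub_le _ _
        _ ≤ M + 16 := by rw [show ‖(16:ℂ)‖ = 16 by norm_num]; linarith
    have h32 : ‖5*z - 32‖ ≤ 5*(M/(n:ℝ)^2) + 32 := by
      calc ‖5*z - 32‖ ≤ ‖(5:ℂ)*z‖ + ‖(32:ℂ)‖ := norm_sub_le _ _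
        _ ≤ 5*(M/(n:ℝ)^2) + 32 := by
            rw [norm_mul, show ‖(5:ℂ)‖ = 5 by norm_num, show ‖(32:ℂ)‖ = 32 by norm_num]
            have := mul_le_mul_of_nonneg_left hz (by norm_num : (0:ℝ) ≤ 5)
            linarith
    have h1 : ‖(z-4)^2*(z-16)‖ ≤ (M+4)^2*(M+16) := by
      rw [norm_mul, norm_pow]
      apply mul_le_mul (pow_le_pow_left₀ (norm_nonneg _) hz4 2) hz16 (norm_nonneg _)
        (by positivity)
    have h2 : ‖16*(n:ℂ)^2*(5*z-32)‖ ≤ 80*M + 512*(n:ℝ)^2 := by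
      rw [norm_mul, norm_mul, norm_pow, Complex.norm_natCast,
        show ‖(16:ℂ)‖ = 16 by norm_num]
      have hb := mul_le_mul_of_nonneg_left h32 (by positivity : (0:ℝ) ≤ 16*(n:ℝ)^2)
      have heq : 16*(n:ℝ)^2 * (5*(M/(n:ℝ)^2) + 32) = 80*M + 512*(n:ℝ)^2 := by
        field_simp
        ring
      rw [heq] at hb
      linarith [hb]
    calc ‖S‖ ≤ 2*(‖(z-4)^2*(z-16)‖ + ‖16*(n:ℂ)^2*(5*z-32)‖) := by
          rw [hS, norm_mul, show ‖(2:ℂ)‖ = 2 by norm_num]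
          have := norm_add_le ((z-4)^2*(z-16)) (16*(n:ℂ)^2*(5*z-32))
          linarith
      _ ≤ 2*((M+4)^2*(M+16) + (80*M + 512*(n:ℝ)^2)) := by linarith
      _ ≤ K * (n:ℝ)^2 := by
          rw [hK]
          nlinarith [mul_nonneg (by positivity : (0:ℝ) ≤ 2*(M+4)^2*(M+16) + 160*M) (by linarith : (0:ℝ) ≤ (n:ℝ)^2 - 1)]
  have hden : 729*(n:ℝ)^6 ≤ ‖D1‖^2*‖E1‖*(‖D2‖^2*‖E2‖) := by
    have he : 729*(n:ℝ)^6 = (3*(n:ℝ))^2*(3*(n:ℝ))*((3*(n:ℝ))^2*(3*(n:ℝ))) := by ring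
    rw [he]
    gcongr <;> first | positivity | linarith
  calc ‖a‖^4 * ‖S‖ / (‖D1‖^2*‖E1‖*(‖D2‖^2*‖E2‖))
      ≤ ‖a‖^4 * (K*(n:ℝ)^2) / (729*(n:ℝ)^6) := by
        apply div_le_div₀ (by positivity)
          (mul_le_mul_of_nonneg_left hSbound (by positivity)) (by positivity) hden
    _ = (‖a‖^4 * K / 729) / (n:ℝ)^4 := by field_simp

lemma Acoef_norm_le' {a : ℂ} {n : ℕ} {z : ℂ} {p : ℕ} (hn : 2 ≤ n) (hz : ‖z‖ ≤ 1) :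
    ‖Acoef a n z p‖ ≤ ‖a‖ * (‖a‖/((n:ℝ)-1))^p := by
  have h := Acoef_norm_le (a := a) (n := n) (z := z) (p := p) hn hz
  have hn2 : (2:ℝ) ≤ (n:ℝ) := by exact_mod_cast hn
  have hne : ((n:ℝ)-1) ≠ 0 := by linarith
  have heq : 2^p * (‖a‖^(p+1) / (2*(n:ℝ)-2)^p) = ‖a‖ * (‖a‖/((n:ℝ)-1))^p := by
    rw [show 2*(n:ℝ)-2 = 2*((n:ℝ)-1) by ring, mul_pow, div_pow, pow_succ]
    field_simp
  rw [heq] at h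
  exact h

lemma tail_est (a : ℂ) (n : ℕ) (z : ℂ) (hz : ‖z‖ ≤ 1) (hnb : 2*‖a‖ + 2 ≤ (n:ℝ)) :
    ‖∑' i : ℕ, Acoef a n z (i+5)‖ ≤ 64*‖a‖^6/(n:ℝ)^4 := by
  have hb0 : (0:ℝ) ≤ ‖a‖ := norm_nonneg a
  have hn2R : (2:ℝ) ≤ (n:ℝ) := by linarith
  have hn2 : 2 ≤ n := by exact_mod_cast hn2R
  have hn0 : (0:ℝ) < (n:ℝ) := by linarith
  set b := ‖a‖ with hbdef
  set q := b/((n:ℝ)-1) with hq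
  have hn1 : (1:ℝ) ≤ (n:ℝ)-1 := by linarith
  have hq0 : 0 ≤ q := by rw [hq]; positivity
  have hq2 : q ≤ 1/2 := by
    rw [hq, div_le_iff₀ (by linarith)]
    linarith
  have hqn : q ≤ 2*b/(n:ℝ) := by
    rw [hq, div_le_div_iff₀ (by linarith) hn0]
    nlinarith
  have hbound : ∀ i, ‖Acoef a n z (i+5)‖ ≤ b * q^(i+5) := fun i =>
    Acoef_norm_le' hn2 hz
  have hgeom : Summable (fun i : ℕ => q^i) :=
    summable_geometric_of_lt_one hq0 (by linarith)
  have hsum : Summable (fun i : ℕ => b * q^(i+5)) := by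
    apply Summable.congr ((hgeom.mul_left (b*q^5)))
    intro i
    rw [pow_add]
    ring
  have hnormsum : Summable (fun i : ℕ => ‖Acoef a n z (i+5)‖) :=
    Summable.of_nonneg_of_le (fun i => norm_nonneg _) hbound hsum
  have h1 : ‖∑' i : ℕ, Acoef a n z (i+5)‖ ≤ ∑' i : ℕ, (b * q^(i+5)) := by
    calc ‖∑' i : ℕ, Acoef a n z (i+5)‖ ≤ ∑' i : ℕ, ‖Acoef a n z (i+5)‖ :=
          norm_tsum_le_tsum_norm hnormsum
      _ ≤ ∑' i : ℕ, (b * q^(i+5)) := Summable.tsum_le_tsum hbound hnormsum hsum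
  have h2 : ∑' i : ℕ, (b * q^(i+5)) = b*q^5*(1-q)⁻¹ := by
    calc ∑' i : ℕ, (b * q^(i+5)) = ∑' i : ℕ, (b*q^5)*q^i := by
          apply tsum_congr
          intro i
          rw [pow_add]
          ring
      _ = (b*q^5) * ∑' i : ℕ, q^i := tsum_mul_left
      _ = b*q^5*(1-q)⁻¹ := by rw [tsum_geometric_of_lt_one hq0 (by linarith)]
  have hinv : (1-q)⁻¹ ≤ 2 := by
    have hhalf : (1:ℝ)/2 ≤ 1 - q := by linarith
    calc (1-q)⁻¹ ≤ ((1:ℝ)/2)⁻¹ := by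
          apply inv_anti₀ (by norm_num) hhalf
      _ = 2 := by norm_num
  have hq5 : q^5 ≤ (2*b/(n:ℝ))^5 := pow_le_pow_left₀ hq0 hqn 5
  have h3 : b*q^5*(1-q)⁻¹ ≤ b*(2*b/(n:ℝ))^5*2 := by
    have hinv0 : (0:ℝ) ≤ (1-q)⁻¹ := inv_nonneg.mpr (by linarith)
    have hx : (0:ℝ) ≤ 2*b/(n:ℝ) := div_nonneg (by linarith) (le_of_lt hn0)
    exact mul_le_mul (mul_le_mul_of_nonneg_left hq5 hb0) hinv hinv0
      (mul_nonneg hb0 (pow_nonneg hx 5))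
  have h4 : b*(2*b/(n:ℝ))^5*2 = 64*b^6/(n:ℝ)^5 := by
    rw [div_pow, mul_pow]
    field_simp
    ring
  have h5 : 64*b^6/(n:ℝ)^5 ≤ 64*b^6/(n:ℝ)^4 := by
    apply div_le_div_of_nonneg_left (by positivity) (by positivity)
    calc (n:ℝ)^4 = (n:ℝ)^4 * 1 := by ring
      _ ≤ (n:ℝ)^4 * (n:ℝ) := by
          apply mul_le_mul_of_nonneg_left (by linarith) (by positivity)
      _ = (n:ℝ)^5 := by ring
  calc ‖∑' i : ℕ, Acoef a n z (i+5)‖ ≤ ∑' i : ℕ, (b * q^(i+5)) := h1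
    _ = b*q^5*(1-q)⁻¹ := h2
    _ ≤ b*(2*b/(n:ℝ))^5*2 := h3
    _ = 64*b^6/(n:ℝ)^5 := h4
    _ ≤ 64*b^6/(n:ℝ)^4 := h5

/-- For every `M > 0` there are `C > 0` and `N` such that for all `n ≥ N` and all `z` with
`|z| ≤ M/n²` one has `|α_n(z) - a²/(2n²)| ≤ C/n⁴`. -/
theorem mathieu_stmt_11 (a : ℂ) (ha : a ≠ 0) (M : ℝ) (hM : 0 < M) :
    ∃ C > (0 : ℝ), ∃ N : ℕ, ∀ n ≥ N, ∀ z : ℂ, ‖z‖ ≤ M / (n : ℝ) ^ 2 →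
      ‖alphaC a n z - a ^ 2 / (2 * (n : ℂ) ^ 2)‖ ≤ C / (n : ℝ) ^ 4 := by
  have hb0 : (0:ℝ) < ‖a‖ := norm_pos_iff.mpr ha
  refine ⟨‖a‖^2 * (4*M + (M+4)^2) / 16 + ‖a‖^4 * (2*(M+4)^2*(M+16) + 160*M + 1024) / 729
      + 64*‖a‖^6 + 1, by positivity, ⌈M⌉₊ + 2*⌈‖a‖⌉₊ + 20, ?_⟩
  intro n hn z hz
  -- basic numeric facts
  have hNn : ((⌈M⌉₊ + 2*⌈‖a‖⌉₊ + 20 : ℕ) : ℝ) ≤ (n:ℝ) := by exact_mod_cast hn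
  have hMceil : M ≤ (⌈M⌉₊ : ℝ) := Nat.le_ceil M
  have hbceil : ‖a‖ ≤ (⌈‖a‖⌉₊ : ℝ) := Nat.le_ceil ‖a‖
  have hcast : ((⌈M⌉₊ + 2*⌈‖a‖⌉₊ + 20 : ℕ) : ℝ)
      = (⌈M⌉₊ : ℝ) + 2*(⌈‖a‖⌉₊ : ℝ) + 20 := by push_cast; ring
  rw [hcast] at hNn
  have hbc0 : (0:ℝ) ≤ (⌈‖a‖⌉₊ : ℝ) := by positivity
  have hMc0 : (0:ℝ) ≤ (⌈M⌉₊ : ℝ) := by positivity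
  have hn17 : (17:ℝ) ≤ (n:ℝ) := by linarith
  have hnM4 : M + 4 ≤ (n:ℝ) := by linarith
  have hnb : 2*‖a‖ + 2 ≤ (n:ℝ) := by linarith
  have hn0 : (0:ℝ) < (n:ℝ) := by linarith
  have hnn2 : 2 ≤ n := by exact_mod_cast (by linarith : (2:ℝ) ≤ (n:ℝ))
  have hnn5 : 5 ≤ n := by exact_mod_cast (by linarith : (5:ℝ) ≤ (n:ℝ))
  have hn2sq : (1:ℝ) ≤ (n:ℝ)^2 := by nlinarith
  have hz1 : ‖z‖ ≤ 1 := by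
    calc ‖z‖ ≤ M / (n:ℝ)^2 := hz
      _ ≤ 1 := by rw [div_le_one (by positivity)]; nlinarith
  -- summability
  have hq0 : 0 ≤ ‖a‖/((n:ℝ)-1) := div_nonneg (norm_nonneg _) (by linarith)
  have hq2 : ‖a‖/((n:ℝ)-1) ≤ 1/2 := by
    rw [div_le_iff₀ (by linarith)]
    linarith
  have hgeom : Summable (fun i : ℕ => (‖a‖/((n:ℝ)-1))^i) :=
    summable_geometric_of_lt_one hq0 (by linarith)
  have hsumb : Summable (fun p : ℕ => ‖a‖ * (‖a‖/((n:ℝ)-1))^(p+1)) := by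
    apply Summable.congr (hgeom.mul_left (‖a‖ * (‖a‖/((n:ℝ)-1))))
    intro i
    rw [pow_succ]
    ring
  have hsum : Summable (fun p : ℕ => Acoef a n z (p+1)) :=
    Summable.of_norm_bounded hsumb (fun p => Acoef_norm_le' hnn2 hz1)
  -- splitting
  have hsplit := Summable.sum_add_tsum_nat_add (f := fun p : ℕ => Acoef a n z (p+1)) 4 hsum
  have halpha : alphaC a n z = (Acoef a n z 1 + Acoef a n z 2 + Acoef a n z 3 + Acoef a n z 4)
      + ∑' i : ℕ, Acoef a n z (i+5) := by
    rw [alphaC, ← hsplit, Finset.sum_range_succ, Finset.sum_range_succ, Finset.sum_range_succ,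
      Finset.sum_range_succ, Finset.sum_range_zero, zero_add]
  rw [halpha, Acoef_even_zero (by norm_num : (2:ℕ) % 2 = 0),
    Acoef_even_zero (by norm_num : (4:ℕ) % 2 = 0), add_zero, add_zero,
    Acoef_one hnn2, Acoef_three hnn5]
  set A1 : ℂ := a^2 / ((n:ℂ)^2 - ((n:ℂ)+2)^2 + z) + a^2 / ((n:ℂ)^2 - ((n:ℂ)-2)^2 + z) with hA1
  set A3 : ℂ := a^4 / (((n:ℂ)^2 - ((n:ℂ)+2)^2 + z)^2 * ((n:ℂ)^2 - ((n:ℂ)+4)^2 + z))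
      + a^4 / (((n:ℂ)^2 - ((n:ℂ)-2)^2 + z)^2 * ((n:ℂ)^2 - ((n:ℂ)-4)^2 + z)) with hA3
  set T : ℂ := ∑' i : ℕ, Acoef a n z (i+5) with hT
  have hregroup : A1 + A3 + T - a^2/(2*(n:ℂ)^2)
      = ((A1 - a^2/(2*(n:ℂ)^2)) + A3) + T := by ring
  rw [hregroup]
  have h1 := est1 a M hM n z hnM4 hz
  have h3 := est3 a M hM n z hnM4 hn17 hz
  have hTb := tail_est a n z hz1 hnb
  rw [← hA1] at h1
  rw [← hA3] at h3
  rw [← hT] at hTb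
  have htotal : ‖((A1 - a^2/(2*(n:ℂ)^2)) + A3) + T‖
      ≤ ‖A1 - a^2/(2*(n:ℂ)^2)‖ + ‖A3‖ + ‖T‖ := by
    calc ‖((A1 - a^2/(2*(n:ℂ)^2)) + A3) + T‖
        ≤ ‖(A1 - a^2/(2*(n:ℂ)^2)) + A3‖ + ‖T‖ := norm_add_le _ _
      _ ≤ ‖A1 - a^2/(2*(n:ℂ)^2)‖ + ‖A3‖ + ‖T‖ := by
          have := norm_add_le (A1 - a^2/(2*(n:ℂ)^2)) A3
          linarith
  have hfinal : (‖a‖^2 * (4*M + (M+4)^2) / 16) / (n:ℝ)^4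
      + (‖a‖^4 * (2*(M+4)^2*(M+16) + 160*M + 1024) / 729) / (n:ℝ)^4
      + 64*‖a‖^6/(n:ℝ)^4
      ≤ (‖a‖^2 * (4*M + (M+4)^2) / 16 + ‖a‖^4 * (2*(M+4)^2*(M+16) + 160*M + 1024) / 729
        + 64*‖a‖^6 + 1) / (n:ℝ)^4 := by
    have hexp : (‖a‖^2 * (4*M + (M+4)^2) / 16 + ‖a‖^4 * (2*(M+4)^2*(M+16) + 160*M + 1024) / 729
        + 64*‖a‖^6 + 1) / (n:ℝ)^4
        = (‖a‖^2 * (4*M + (M+4)^2) / 16) / (n:ℝ)^4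
          + (‖a‖^4 * (2*(M+4)^2*(M+16) + 160*M + 1024) / 729) / (n:ℝ)^4
          + 64*‖a‖^6/(n:ℝ)^4 + 1/(n:ℝ)^4 := by ring
    rw [hexp]
    have : (0:ℝ) ≤ 1/(n:ℝ)^4 := by positivity
    linarith
  linarith
end

section
/- Let a ∈ ℂ, a ≠ 0, and let V be the Mathieu Fourier coefficients. For every integer n ≥ 2 and every z ∈ ℂ with |z| ≤ 1, one has S_{n−1}^{21}(n,z) = a^n / ∏_{k=1}^{n−1} (n² − (−n+2k)² + z). In particular, S_{n−1}^{21}(n,0) = 4·(a/4)^n / ((n−1)!)². -/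
open Complex

lemma nat_prod_aux (n : ℕ) (hn : 1 ≤ n) :
    ∏ k ∈ Finset.Icc 1 (n - 1), (k * (n - k)) = (Nat.factorial (n - 1)) ^ 2 := by
  have hIcc : Finset.Icc 1 (n - 1) = Finset.Ico 1 n := by
    ext x; simp only [Finset.mem_Icc, Finset.mem_Ico]; omega
  rw [Finset.prod_mul_distrib]
  have h1 : ∏ k ∈ Finset.Icc 1 (n - 1), k = Nat.factorial (n - 1) := by
    have := Finset.prod_Ico_id_eq_factorial (n - 1)
    rw [show n - 1 + 1 = n from by omega] at this
    rw [hIcc]; exact this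
  have h2 : ∏ k ∈ Finset.Icc 1 (n - 1), (n - k) = ∏ k ∈ Finset.Icc 1 (n - 1), k := by
    refine Finset.prod_nbij' (fun k => n - k) (fun k => n - k) ?_ ?_ ?_ ?_ ?_
    all_goals intro a ha
    all_goals simp only [Finset.mem_Icc] at ha ⊢
    all_goals omega
  rw [h1, h2, h1, sq]

/-- For the Mathieu potential, `S_{n-1}^{21}(n,z) = a^n / ∏_{k=1}^{n-1} (n²-(-n+2k)²+z)`;
in particular `S_{n-1}^{21}(n,0) = 4 (a/4)^n / ((n-1)!)²`. -/
theorem mathieu_stmt_13 (a : ℂ) (ha : a ≠ 0) (n : ℕ) (hn : 2 ≤ n) (z : ℂ) (hz : ‖z‖ ≤ 1) :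
    S21 a n z (n - 1)
      = a ^ n / ∏ k ∈ Finset.Icc 1 (n - 1), ((n : ℂ) ^ 2 - (-(n : ℂ) + 2 * (k : ℂ)) ^ 2 + z) ∧
    S21 a n 0 (n - 1) = 4 * (a / 4) ^ n / ((Nat.factorial (n - 1) : ℂ)) ^ 2 := by
  have hkn : n - 1 + 1 = n := by omega
  have key : ∀ w : ℂ, S21 a n w (n - 1)
      = a ^ n / ∏ k ∈ Finset.Icc 1 (n - 1), ((n : ℂ) ^ 2 - (-(n : ℂ) + 2 * (k : ℂ)) ^ 2 + w) := by
    intro w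
    set j0 : Fin (n - 1) → {m : ℤ // m ≠ (n : ℤ) ∧ m ≠ -(n : ℤ)} :=
      fun s => ⟨-(n : ℤ) + 2 * ((s : ℕ) + 1), by
        have := s.isLt; constructor <;> omega⟩ with hj0
    -- every other term vanishes
    have hzero : ∀ j, j ≠ j0 → Sterm (mathieuV a) n w (-(n : ℤ)) (n : ℤ) (n - 1) j = 0 := by
      intro j hj
      unfold Sterm
      rw [div_eq_zero_iff]
      left
      by_contra hne
      apply hj
      replace hne := Finset.prod_ne_zero_iff.mp hne
      set W := extWalk (-(n : ℤ)) (n : ℤ) (n - 1) (fun s => ((j s : ℤ))) with hW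
      have hW0 : W 0 = -(n : ℤ) := by
        rw [hW]; unfold extWalk; rw [dif_neg (by omega), if_pos rfl]
      have hWn : W n = (n : ℤ) := by
        rw [hW]; unfold extWalk; rw [dif_neg (by omega), if_neg (by omega)]
      have hd : ∀ i ∈ Finset.range n, W (i + 1) - W i = 2 ∨ W (i + 1) - W i = -2 := by
        intro i hi
        have hi' : i ∈ Finset.range (n - 1 + 1) := by rwa [hkn]
        exact mathieuV_ne_zero (hne i hi')
      have hsum : ∑ i ∈ Finset.range n, (W (i + 1) - W i) = 2 * n := by
        rw [Finset.sum_range_sub, hWn, hW0]; ring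
      have hall : ∀ i ∈ Finset.range n, W (i + 1) - W i = 2 := by
        by_contra hc
        push_neg at hc
        obtain ⟨i0, hi0, hne2⟩ := hc
        have hlt : ∑ i ∈ Finset.range n, (W (i + 1) - W i)
            < ∑ i ∈ Finset.range n, (2 : ℤ) := by
          refine Finset.sum_lt_sum (fun i hi => ?_) ⟨i0, hi0, ?_⟩
          · rcases hd i hi with h | h <;> omega
          · rcases hd i0 hi0 with h | h
            · exact absurd h hne2
            · omega
        rw [hsum, Finset.sum_const, Finset.card_range, nsmul_eq_mul] at hlt
        omega
      have hWv : ∀ i, i ≤ n → W i = -(n : ℤ) + 2 * i := by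
        intro i
        induction i with
        | zero => intro _; simpa using hW0
        | succ m ih =>
          intro h
          have hm := ih (by omega)
          have h2 := hall m (Finset.mem_range.mpr (by omega))
          push_cast
          push_cast at hm h2
          omega
      funext s
      apply Subtype.ext
      have hs := s.isLt
      have hws : W ((s : ℕ) + 1) = ((j s : ℤ)) := by
        rw [hW]; unfold extWalk
        rw [dif_pos ⟨by omega, by omega⟩]
        congr 1
      have := hWv ((s : ℕ) + 1) (by omega)
      rw [hws] at this
      simp only [hj0]
      push_cast at this ⊢
      omega
    have hval : Sterm (mathieuV a) n w (-(n : ℤ)) (n : ℤ) (n - 1) j0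
        = a ^ n / ∏ k ∈ Finset.Icc 1 (n - 1), ((n : ℂ) ^ 2 - (-(n : ℂ) + 2 * (k : ℂ)) ^ 2 + w) := by
      unfold Sterm
      set W := extWalk (-(n : ℤ)) (n : ℤ) (n - 1) (fun s => ((j0 s : ℤ))) with hW
      have hWv : ∀ i, i ≤ n → W i = -(n : ℤ) + 2 * i := by
        intro i hi
        rw [hW]; unfold extWalk
        split_ifs with h1 h2
        · simp only [hj0]
          omega
        · omega
        · omega
      congr 1
      · rw [hkn]
        have : ∀ i ∈ Finset.range n, mathieuV a (W (i + 1) - W i) = a := by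
          intro i hi
          rw [Finset.mem_range] at hi
          rw [hWv (i + 1) (by omega), hWv i (by omega)]
          have h2 : (-(n : ℤ) + 2 * (↑(i + 1)) - (-(n : ℤ) + 2 * i)) = 2 := by push_cast; ring
          rw [h2]
          simp [mathieuV]
        rw [Finset.prod_congr rfl this, Finset.prod_const, Finset.card_range]
      · have hIcc : Finset.Icc 1 (n - 1) = Finset.Ico 1 n := by
          ext x; simp only [Finset.mem_Icc, Finset.mem_Ico]; omega
        rw [hIcc, Finset.prod_Ico_eq_prod_range]
        rw [← Fin.prod_univ_eq_prod_range
          (fun i => ((n : ℂ) ^ 2 - (-(n : ℂ) + 2 * ((1 + i : ℕ) : ℂ)) ^ 2 + w)) (n - 1)]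
        apply Finset.prod_congr rfl
        intro s _
        simp only [hj0]
        push_cast
        ring
    unfold S21
    rw [tsum_eq_single j0 hzero, hval]
  refine ⟨key z, ?_⟩
  rw [key 0]
  have hF : ∏ k ∈ Finset.Icc 1 (n - 1), ((n : ℂ) ^ 2 - (-(n : ℂ) + 2 * (k : ℂ)) ^ 2 + 0)
      = 4 ^ (n - 1) * ((Nat.factorial (n - 1) : ℂ)) ^ 2 := by
    have hfac : ∀ k ∈ Finset.Icc 1 (n - 1),
        ((n : ℂ) ^ 2 - (-(n : ℂ) + 2 * (k : ℂ)) ^ 2 + 0) = 4 * ((k * (n - k) : ℕ) : ℂ) := by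
      intro k hk
      simp only [Finset.mem_Icc] at hk
      have h1 : k ≤ n := by omega
      push_cast [Nat.cast_sub h1]
      ring
    rw [Finset.prod_congr rfl hfac, Finset.prod_mul_distrib, Finset.prod_const, Nat.card_Icc,
      ← Nat.cast_prod, nat_prod_aux n (by omega)]
    rw [show n - 1 + 1 - 1 = n - 1 from by omega]
    push_cast
    ring
  rw [hF]
  have hFne : ((Nat.factorial (n - 1) : ℂ)) ≠ 0 :=
    Nat.cast_ne_zero.mpr (Nat.factorial_ne_zero _)
  have h4 : (4 : ℂ) ≠ 0 := by norm_num
  have h4n : (4 : ℂ) ^ n = 4 ^ (n - 1) * 4 := by rw [← pow_succ, hkn]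
  have han : a ^ n = (a / 4) ^ n * 4 ^ n := by rw [div_pow]; field_simp
  rw [han, h4n]
  field_simp
end

section
/- Let a ∈ ℂ, a ≠ 0. For every M > 0 there exist a constant C > 0 and an integer N such that for all n ≥ N and all z ∈ ℂ with |z − a²/(2n²)| ≤ M/n⁴, one has |∏_{k=1}^{n−1} (1 + z/(4k(n−k)))^{−1} − (1 − a²·log n/(4n³) − a²·γ/(4n³))| ≤ C/n⁴. -/
open Complex

set_option maxHeartbeats 1000000

open Complex Finset

lemma aux_prod_sub_one {ι : Type*} (s : Finset ι) (w : ι → ℂ) :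
    ‖(∏ i ∈ s, (1 + w i)) - 1‖ ≤ (∏ i ∈ s, (1 + ‖w i‖)) - 1 := by
  induction s using Finset.cons_induction with
  | empty => simp
  | cons a s ha ih =>
    rw [Finset.prod_cons, Finset.prod_cons]
    have h1 : ∀ i ∈ s, (1:ℝ) ≤ 1 + ‖w i‖ := fun i _ => by linarith [norm_nonneg (w i)]
    have hP : (1:ℝ) ≤ ∏ i ∈ s, (1 + ‖w i‖) := by
      calc (1:ℝ) = ∏ _i ∈ s, (1:ℝ) := by simp
        _ ≤ ∏ i ∈ s, (1 + ‖w i‖) :=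
          Finset.prod_le_prod (fun i _ => zero_le_one) h1
    have key : (1 + w a) * ∏ i ∈ s, (1 + w i) - 1
        = ((∏ i ∈ s, (1 + w i)) - 1) + w a * ∏ i ∈ s, (1 + w i) := by ring
    rw [key]
    have hnp : ‖∏ i ∈ s, (1 + w i)‖ ≤ ∏ i ∈ s, (1 + ‖w i‖) := by
      calc ‖∏ i ∈ s, (1 + w i)‖ = ‖((∏ i ∈ s, (1 + w i)) - 1) + 1‖ := by ring_nf
        _ ≤ ‖(∏ i ∈ s, (1 + w i)) - 1‖ + 1 := by simpa using norm_add_le (∏ i ∈ s, (1 + w i) - 1) 1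
        _ ≤ ((∏ i ∈ s, (1 + ‖w i‖)) - 1) + 1 := by linarith
        _ = ∏ i ∈ s, (1 + ‖w i‖) := by ring
    calc ‖((∏ i ∈ s, (1 + w i)) - 1) + w a * ∏ i ∈ s, (1 + w i)‖
        ≤ ‖(∏ i ∈ s, (1 + w i)) - 1‖ + ‖w a‖ * ‖∏ i ∈ s, (1 + w i)‖ := by
          exact le_of_le_of_eq (norm_add_le _ _) (by rw [norm_mul])
      _ ≤ ((∏ i ∈ s, (1 + ‖w i‖)) - 1) + ‖w a‖ * ∏ i ∈ s, (1 + ‖w i‖) := by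
          have := mul_le_mul_of_nonneg_left hnp (norm_nonneg (w a))
          linarith
      _ = (1 + ‖w a‖) * ∏ i ∈ s, (1 + ‖w i‖) - 1 := by ring

lemma aux_prod_sub_linear {ι : Type*} (s : Finset ι) (w : ι → ℂ) :
    ‖(∏ i ∈ s, (1 + w i)) - 1 - ∑ i ∈ s, w i‖
      ≤ (∏ i ∈ s, (1 + ‖w i‖)) - 1 - ∑ i ∈ s, ‖w i‖ := by
  induction s using Finset.cons_induction with
  | empty => simp
  | cons a s ha ih =>
    rw [Finset.prod_cons, Finset.prod_cons, Finset.sum_cons, Finset.sum_cons]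
    have key : (1 + w a) * ∏ i ∈ s, (1 + w i) - 1 - (w a + ∑ i ∈ s, w i)
        = ((∏ i ∈ s, (1 + w i)) - 1 - ∑ i ∈ s, w i) + w a * ((∏ i ∈ s, (1 + w i)) - 1) := by
      ring
    rw [key]
    have h2 := aux_prod_sub_one s w
    calc ‖((∏ i ∈ s, (1 + w i)) - 1 - ∑ i ∈ s, w i) + w a * ((∏ i ∈ s, (1 + w i)) - 1)‖
        ≤ ‖(∏ i ∈ s, (1 + w i)) - 1 - ∑ i ∈ s, w i‖ + ‖w a‖ * ‖(∏ i ∈ s, (1 + w i)) - 1‖ := by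
          exact le_of_le_of_eq (norm_add_le _ _) (by rw [norm_mul])
      _ ≤ ((∏ i ∈ s, (1 + ‖w i‖)) - 1 - ∑ i ∈ s, ‖w i‖)
            + ‖w a‖ * ((∏ i ∈ s, (1 + ‖w i‖)) - 1) := by
          have := mul_le_mul_of_nonneg_left h2 (norm_nonneg (w a))
          linarith
      _ = (1 + ‖w a‖) * ∏ i ∈ s, (1 + ‖w i‖) - 1 - (‖w a‖ + ∑ i ∈ s, ‖w i‖) := by ring

lemma aux_exp_quad {t : ℝ} (ht0 : 0 ≤ t) (ht1 : t ≤ 1) :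
    Real.exp t - 1 - t ≤ t ^ 2 := by
  have h := Real.exp_bound (x := t) (by rw [_root_.abs_of_nonneg ht0]; exact ht1) (n := 2) (by norm_num)
  rw [_root_.abs_of_nonneg ht0] at h
  simp only [Finset.sum_range_succ, Finset.sum_range_zero] at h
  norm_num at h
  have := abs_le.mp h
  linarith [this.2]

lemma aux_prod_quad {ι : Type*} (s : Finset ι) (w : ι → ℂ)
    (hS : ∑ i ∈ s, ‖w i‖ ≤ 1) :
    ‖(∏ i ∈ s, (1 + w i)) - 1 - ∑ i ∈ s, w i‖ ≤ (∑ i ∈ s, ‖w i‖) ^ 2 := by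
  have hS0 : 0 ≤ ∑ i ∈ s, ‖w i‖ := Finset.sum_nonneg fun i _ => norm_nonneg _
  have h1 : (∏ i ∈ s, (1 + ‖w i‖)) ≤ Real.exp (∑ i ∈ s, ‖w i‖) := by
    rw [Real.exp_sum]
    exact Finset.prod_le_prod (fun i _ => by positivity)
      (fun i _ => by rw [add_comm]; exact Real.add_one_le_exp (‖w i‖))
  calc ‖(∏ i ∈ s, (1 + w i)) - 1 - ∑ i ∈ s, w i‖
      ≤ (∏ i ∈ s, (1 + ‖w i‖)) - 1 - ∑ i ∈ s, ‖w i‖ := aux_prod_sub_linear s w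
    _ ≤ Real.exp (∑ i ∈ s, ‖w i‖) - 1 - ∑ i ∈ s, ‖w i‖ := by linarith
    _ ≤ (∑ i ∈ s, ‖w i‖) ^ 2 := aux_exp_quad hS0 hS

lemma aux_inv_prod {ι : Type*} (s : Finset ι) (w : ι → ℂ)
    (hS : ∑ i ∈ s, ‖w i‖ ≤ 1 / 2) :
    ‖(∏ i ∈ s, (1 + w i)⁻¹) - (1 - ∑ i ∈ s, w i)‖ ≤ 6 * (∑ i ∈ s, ‖w i‖) ^ 2 := by
  set S := ∑ i ∈ s, ‖w i‖ with hSdef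
  have hS0 : 0 ≤ S := Finset.sum_nonneg fun i _ => norm_nonneg _
  set v : ι → ℂ := fun i => -(w i) / (1 + w i) with hvdef
  have hwle : ∀ i ∈ s, ‖w i‖ ≤ 1 / 2 := fun i hi =>
    (Finset.single_le_sum (fun j _ => norm_nonneg (w j)) hi).trans hS
  have hden : ∀ i ∈ s, (1 / 2 : ℝ) ≤ ‖1 + w i‖ := by
    intro i hi
    have h := norm_add_le (1 + w i) (-(w i))
    simp only [add_neg_cancel_right, norm_one, norm_neg] at h
    linarith [hwle i hi]
  have hne : ∀ i ∈ s, (1 : ℂ) + w i ≠ 0 := by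
    intro i hi h
    have := hden i hi
    rw [h, norm_zero] at this; linarith
  have hveq : ∀ i ∈ s, (1 + w i)⁻¹ = 1 + v i := by
    intro i hi
    rw [hvdef]; field_simp [hne i hi]; ring
  have hvle : ∀ i ∈ s, ‖v i‖ ≤ 2 * ‖w i‖ := by
    intro i hi
    rw [hvdef]
    simp only [norm_div, norm_neg]
    rw [div_le_iff₀ (by linarith [hden i hi])]
    nlinarith [hden i hi, norm_nonneg (w i)]
  have hvS : ∑ i ∈ s, ‖v i‖ ≤ 2 * S := by
    rw [hSdef, Finset.mul_sum]
    exact Finset.sum_le_sum hvle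
  have hvw : ∀ i ∈ s, ‖v i + w i‖ ≤ 2 * ‖w i‖ ^ 2 := by
    intro i hi
    have heq : v i + w i = (w i) ^ 2 / (1 + w i) := by
      rw [hvdef]; field_simp [hne i hi]; ring
    rw [heq, norm_div, norm_pow]
    rw [div_le_iff₀ (by linarith [hden i hi])]
    nlinarith [hden i hi, norm_nonneg (w i)]
  have hprod : (∏ i ∈ s, (1 + w i)⁻¹) = ∏ i ∈ s, (1 + v i) :=
    Finset.prod_congr rfl hveq
  have h1 : ‖(∏ i ∈ s, (1 + v i)) - 1 - ∑ i ∈ s, v i‖ ≤ (∑ i ∈ s, ‖v i‖) ^ 2 :=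
    aux_prod_quad s v (by linarith)
  have h2 : ‖(∑ i ∈ s, v i) + ∑ i ∈ s, w i‖ ≤ 2 * S ^ 2 := by
    rw [← Finset.sum_add_distrib]
    calc ‖∑ i ∈ s, (v i + w i)‖ ≤ ∑ i ∈ s, ‖v i + w i‖ := norm_sum_le _ _
      _ ≤ ∑ i ∈ s, 2 * ‖w i‖ ^ 2 := Finset.sum_le_sum hvw
      _ ≤ ∑ i ∈ s, 2 * (‖w i‖ * S) := Finset.sum_le_sum (fun i hi => by
          have := (Finset.single_le_sum (fun j _ => norm_nonneg (w j)) hi)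
          nlinarith [norm_nonneg (w i)])
      _ = 2 * S ^ 2 := by rw [← Finset.mul_sum, ← Finset.sum_mul]; ring
  have key : (∏ i ∈ s, (1 + v i)) - (1 - ∑ i ∈ s, w i)
      = ((∏ i ∈ s, (1 + v i)) - 1 - ∑ i ∈ s, v i) + ((∑ i ∈ s, v i) + ∑ i ∈ s, w i) := by
    ring
  rw [hprod, key]
  calc ‖_ + _‖ ≤ ‖(∏ i ∈ s, (1 + v i)) - 1 - ∑ i ∈ s, v i‖
        + ‖(∑ i ∈ s, v i) + ∑ i ∈ s, w i‖ := norm_add_le _ _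
    _ ≤ (∑ i ∈ s, ‖v i‖) ^ 2 + 2 * S ^ 2 := add_le_add h1 h2
    _ ≤ (2 * S) ^ 2 + 2 * S ^ 2 := by
        have h3 : (0:ℝ) ≤ ∑ i ∈ s, ‖v i‖ := Finset.sum_nonneg fun i _ => norm_nonneg _
        nlinarith [hvS]
    _ = 6 * S ^ 2 := by ring

lemma aux_harmonic_le (m : ℕ) : (harmonic m : ℝ) ≤ m := by
  have h : harmonic m ≤ (m : ℚ) := by
    calc harmonic m = ∑ i ∈ Finset.range m, (↑(i + 1) : ℚ)⁻¹ := rfl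
      _ ≤ ∑ _i ∈ Finset.range m, (1 : ℚ) := Finset.sum_le_sum (fun i _ => by
          rw [inv_le_one_iff₀]; right; exact_mod_cast Nat.one_le_iff_ne_zero.mpr (Nat.succ_ne_zero i))
      _ = m := by simp
  exact_mod_cast h

lemma aux_sum_real (n : ℕ) (hn : 2 ≤ n) :
    ∑ k ∈ Finset.Icc 1 (n - 1), (4 * (k : ℝ) * ((n : ℝ) - (k : ℝ)))⁻¹
      = (harmonic (n - 1) : ℝ) / (2 * n) := by
  have hn0 : (0:ℝ) < n := by positivity
  have hterm : ∀ k ∈ Finset.Icc 1 (n - 1),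
      (4 * (k : ℝ) * ((n : ℝ) - (k : ℝ)))⁻¹
        = (1 / (4 * n)) * ((k : ℝ)⁻¹ + ((n : ℝ) - (k : ℝ))⁻¹) := by
    intro k hk
    obtain ⟨hk1, hk2⟩ := Finset.mem_Icc.mp hk
    have hkn : k < n := lt_of_le_of_lt hk2 (Nat.sub_lt (by omega) one_pos)
    have hk0 : (0:ℝ) < k := by exact_mod_cast hk1
    have hnk : (0:ℝ) < (n : ℝ) - (k : ℝ) := by
      have : (k:ℝ) < n := by exact_mod_cast hkn
      linarith
    field_simp
    ring
  rw [Finset.sum_congr rfl hterm, ← Finset.mul_sum, Finset.sum_add_distrib]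
  have hrefl : ∑ k ∈ Finset.Icc 1 (n - 1), ((n : ℝ) - (k : ℝ))⁻¹
      = ∑ k ∈ Finset.Icc 1 (n - 1), ((k : ℝ))⁻¹ := by
    apply Finset.sum_nbij' (i := fun k => n - k) (j := fun k => n - k)
    · intro k hk
      obtain ⟨h1, h2⟩ := Finset.mem_Icc.mp hk
      rw [Finset.mem_Icc]
      omega
    · intro k hk
      obtain ⟨h1, h2⟩ := Finset.mem_Icc.mp hk
      rw [Finset.mem_Icc]
      omega
    · intro k hk
      obtain ⟨h1, h2⟩ := Finset.mem_Icc.mp hk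
      omega
    · intro k hk
      obtain ⟨h1, h2⟩ := Finset.mem_Icc.mp hk
      omega
    · intro k hk
      obtain ⟨h1, h2⟩ := Finset.mem_Icc.mp hk
      have hkn : k ≤ n := by omega
      rw [Nat.cast_sub hkn]
      try ring_nf
  rw [hrefl]
  have hA : ∑ k ∈ Finset.Icc 1 (n - 1), ((k : ℝ))⁻¹ = (harmonic (n - 1) : ℝ) := by
    rw [harmonic_eq_sum_Icc]
    push_cast
    rfl
  rw [hA]
  field_simp
  ring

lemma aux_sum_cplx (n : ℕ) (hn : 2 ≤ n) :
    ∑ k ∈ Finset.Icc 1 (n - 1), (4 * (k : ℂ) * ((n : ℂ) - (k : ℂ)))⁻¹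
      = ((harmonic (n - 1) : ℝ) : ℂ) / (2 * n) := by
  have := aux_sum_real n hn
  calc ∑ k ∈ Finset.Icc 1 (n - 1), (4 * (k : ℂ) * ((n : ℂ) - (k : ℂ)))⁻¹
      = ((∑ k ∈ Finset.Icc 1 (n - 1), (4 * (k : ℝ) * ((n : ℝ) - (k : ℝ)))⁻¹ : ℝ) : ℂ) := by
        push_cast
        try rfl
    _ = ((harmonic (n - 1) : ℝ) : ℂ) / (2 * n) := by rw [this]; push_cast; ring

lemma aux_norm_term (n k : ℕ) (hk : k ∈ Finset.Icc 1 (n - 1)) (hn : 2 ≤ n) :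
    ‖(4 * (k : ℂ) * ((n : ℂ) - (k : ℂ)))⁻¹‖
      = (4 * (k : ℝ) * ((n : ℝ) - (k : ℝ)))⁻¹ := by
  obtain ⟨hk1, hk2⟩ := Finset.mem_Icc.mp hk
  have hkn : k < n := lt_of_le_of_lt hk2 (Nat.sub_lt (by omega) one_pos)
  have hnk : (0:ℝ) < (n : ℝ) - (k : ℝ) := by
    have : (k:ℝ) < n := by exact_mod_cast hkn
    linarith
  have hk0 : (0:ℝ) < k := by exact_mod_cast hk1
  have hcast : (4 * (k : ℂ) * ((n : ℂ) - (k : ℂ)))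
      = ((4 * (k : ℝ) * ((n : ℝ) - (k : ℝ)) : ℝ) : ℂ) := by push_cast; ring
  rw [hcast, norm_inv, Complex.norm_real, Real.norm_of_nonneg (by positivity)]

lemma aux_H_gamma (n : ℕ) (hn : 2 ≤ n) :
    |(harmonic (n - 1) : ℝ) - Real.log n - Real.eulerMascheroniConstant| ≤ 1 / n := by
  have hn0 : (0:ℝ) < n := by positivity
  have h1 := Real.eulerMascheroniSeq_lt_eulerMascheroniConstant (n - 1)
  have h2 := Real.eulerMascheroniConstant_lt_eulerMascheroniSeq' n
  rw [Real.eulerMascheroniSeq] at h1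
  rw [Real.eulerMascheroniSeq'] at h2
  rw [if_neg (by omega : ¬ n = 0)] at h2
  have hsucc : n - 1 + 1 = n := by omega
  have hcast : ((n - 1 : ℕ) : ℝ) + 1 = (n : ℝ) := by
    exact_mod_cast congrArg (fun m : ℕ => (m : ℝ)) hsucc
  rw [hcast] at h1
  have hh : (harmonic n : ℝ) = (harmonic (n - 1) : ℝ) + ((n : ℝ))⁻¹ := by
    have h3 := harmonic_succ (n - 1)
    rw [hsucc] at h3
    have h4 : ((harmonic n : ℚ) : ℝ) = ((harmonic (n - 1) + ((n:ℚ))⁻¹ : ℚ) : ℝ) := by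
      exact_mod_cast congrArg (fun q : ℚ => (q : ℝ)) h3
    push_cast at h4
    exact h4
  rw [hh] at h2
  have hpos : (0:ℝ) < 1 / n := by positivity
  rw [abs_le]
  have h5 : 1 / (n:ℝ) = ((n:ℝ))⁻¹ := one_div _
  constructor
  · rw [h5]
    linarith
  · linarith

/-- For every `M > 0` there are `C > 0` and `N` such that for all `n ≥ N` and all `z ∈ ℂ`
with `|z - a²/(2n²)| ≤ M/n⁴`,
`|∏_{k=1}^{n-1} (1 + z/(4k(n-k)))⁻¹ - (1 - a² log n/(4n³) - a² γ/(4n³))| ≤ C/n⁴`,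
where `γ` is the Euler–Mascheroni constant. -/
theorem mathieu_stmt_14 (a : ℂ) (ha : a ≠ 0) (M : ℝ) (hM : 0 < M) :
    ∃ C > (0 : ℝ), ∃ N : ℕ, ∀ n ≥ N, ∀ z : ℂ, ‖z - a ^ 2 / (2 * (n : ℂ) ^ 2)‖ ≤ M / (n : ℝ) ^ 4 →
      ‖(∏ k ∈ Finset.Icc 1 (n - 1), (1 + z / (4 * (k : ℂ) * ((n : ℂ) - (k : ℂ))))⁻¹)
          - (1 - a ^ 2 * (Real.log n : ℂ) / (4 * (n : ℂ) ^ 3)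
              - a ^ 2 * (Real.eulerMascheroniConstant : ℂ) / (4 * (n : ℂ) ^ 3))‖
        ≤ C / (n : ℝ) ^ 4 := by
  set K : ℝ := ‖a‖ ^ 2 / 2 + M with hKdef
  have hK0 : 0 < K := by positivity
  refine ⟨3 * K ^ 2 / 2 + M / 2 + ‖a‖ ^ 2 / 4 + 1, by positivity,
    max 2 (Nat.ceil K + 1), ?_⟩
  intro n hn z hz
  have hn2 : 2 ≤ n := le_trans (le_max_left _ _) hn
  have hn0 : (0:ℝ) < n := by positivity
  have hn1 : (1:ℝ) ≤ n := by exact_mod_cast hn2.trans' (by norm_num)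
  have hnezc : (n:ℂ) ≠ 0 := Nat.cast_ne_zero.mpr (by omega)
  have hnK : K ≤ ((n:ℝ)) ^ 2 := by
    have h1 : Nat.ceil K + 1 ≤ n := le_trans (le_max_right _ _) hn
    have h2 : K ≤ (Nat.ceil K : ℝ) := Nat.le_ceil K
    have h3 : ((Nat.ceil K : ℕ) : ℝ) + 1 ≤ (n : ℝ) := by exact_mod_cast h1
    nlinarith
  -- the terms
  set w : ℕ → ℂ := fun k => z * (4 * (k : ℂ) * ((n : ℂ) - (k : ℂ)))⁻¹ with hwdef
  set H : ℝ := (harmonic (n - 1) : ℝ) with hHdef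
  have hH0 : 0 ≤ H := by
    rw [hHdef]
    exact_mod_cast (harmonic_pos (Nat.sub_ne_zero_of_lt (by omega))).le
  have hHn : H ≤ (n:ℝ) := by
    refine (aux_harmonic_le (n-1)).trans ?_
    exact_mod_cast Nat.sub_le n 1
  have hT : H / (2 * n) ≤ 1 / 2 := by
    rw [div_le_div_iff₀ (by positivity) (by norm_num)]
    linarith
  have hT0 : 0 ≤ H / (2 * n) := by positivity
  -- norm of z
  have hc : ‖a ^ 2 / (2 * (n:ℂ) ^ 2)‖ = ‖a‖ ^ 2 / (2 * (n:ℝ) ^ 2) := by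
    rw [norm_div, norm_pow]
    congr 1
    rw [show (2 * (n:ℂ) ^ 2) = ((2 * (n:ℝ) ^ 2 : ℝ) : ℂ) by push_cast; ring,
      Complex.norm_real, Real.norm_of_nonneg (by positivity)]
  have hz' : ‖z‖ ≤ K / (n:ℝ) ^ 2 := by
    have h1 : ‖z‖ ≤ ‖z - a ^ 2 / (2 * (n:ℂ) ^ 2)‖ + ‖a ^ 2 / (2 * (n:ℂ) ^ 2)‖ := by
      calc ‖z‖ = ‖(z - a ^ 2 / (2 * (n:ℂ) ^ 2)) + a ^ 2 / (2 * (n:ℂ) ^ 2)‖ := by ring_nf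
        _ ≤ _ := norm_add_le _ _
    have h2 : M / (n:ℝ) ^ 4 ≤ M / (n:ℝ) ^ 2 :=
      div_le_div_of_nonneg_left hM.le (by positivity)
        (by nlinarith [sq_nonneg ((n:ℝ) ^ 2 - 1), sq_nonneg ((n:ℝ) - 1)])
    rw [hc] at h1
    rw [hKdef]
    have : K / (n:ℝ)^2 = ‖a‖^2 / (2 * (n:ℝ)^2) + M / (n:ℝ)^2 := by
      rw [hKdef]; field_simp
    rw [hKdef] at this
    linarith [this]
  -- sum of norms
  set S : ℝ := ∑ k ∈ Finset.Icc 1 (n-1), ‖w k‖ with hSdef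
  have hSeq : S = ‖z‖ * (H / (2 * n)) := by
    rw [hSdef]
    have hterm : ∀ k ∈ Finset.Icc 1 (n-1),
        ‖w k‖ = ‖z‖ * (4 * (k : ℝ) * ((n : ℝ) - (k : ℝ)))⁻¹ := by
      intro k hk
      rw [hwdef]
      simp only
      rw [norm_mul, aux_norm_term n k hk hn2]
    rw [Finset.sum_congr rfl hterm, ← Finset.mul_sum, aux_sum_real n hn2]
  have hS2 : S ≤ K / (2 * (n:ℝ) ^ 2) := by
    rw [hSeq]
    calc ‖z‖ * (H / (2 * n)) ≤ (K / (n:ℝ)^2) * (1/2) :=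
          mul_le_mul hz' hT hT0 (by positivity)
      _ = K / (2 * (n:ℝ)^2) := by ring
  have hShalf : S ≤ 1 / 2 := by
    refine hS2.trans ?_
    rw [div_le_div_iff₀ (by positivity) (by norm_num)]
    linarith
  have hS0 : 0 ≤ S := Finset.sum_nonneg fun i _ => norm_nonneg _
  -- main product bound
  have hmain := aux_inv_prod (Finset.Icc 1 (n-1)) w hShalf
  -- sum identity
  have hsum : ∑ k ∈ Finset.Icc 1 (n-1), w k = z * ((H : ℂ) / (2 * (n:ℂ))) := by
    rw [hwdef]
    simp only
    rw [← Finset.mul_sum, aux_sum_cplx n hn2]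
  -- decomposition of linear part
  set γ : ℝ := Real.eulerMascheroniConstant with hγdef
  have hEeq : (1 - ∑ k ∈ Finset.Icc 1 (n-1), w k)
      - (1 - a ^ 2 * (Real.log n : ℂ) / (4 * (n : ℂ) ^ 3) - a ^ 2 * (γ : ℂ) / (4 * (n : ℂ) ^ 3))
      = -((z - a ^ 2 / (2 * (n:ℂ) ^ 2)) * ((H:ℂ) / (2 * (n:ℂ)))
          + a ^ 2 * ((H:ℂ) - (Real.log n : ℂ) - (γ:ℂ)) / (4 * (n:ℂ) ^ 3)) := by
    rw [hsum]
    field_simp [hnezc]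
    ring
  have hnormHc : ‖(H:ℂ) / (2 * (n:ℂ))‖ = H / (2 * n) := by
    rw [show ((H:ℂ) / (2 * (n:ℂ))) = ((H / (2 * n) : ℝ) : ℂ) by push_cast; ring,
      Complex.norm_real, Real.norm_of_nonneg hT0]
  have hnormdiff : ‖(H:ℂ) - (Real.log n : ℂ) - (γ:ℂ)‖ ≤ 1 / n := by
    rw [show ((H:ℂ) - (Real.log n : ℂ) - (γ:ℂ)) = ((H - Real.log n - γ : ℝ) : ℂ) by push_cast; ring,
      Complex.norm_real, Real.norm_eq_abs]
    exact aux_H_gamma n hn2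
  have hnorm4n3 : ‖(4 * (n:ℂ) ^ 3)‖ = 4 * (n:ℝ) ^ 3 := by
    rw [show (4 * (n:ℂ) ^ 3) = ((4 * (n:ℝ) ^ 3 : ℝ) : ℂ) by push_cast; ring,
      Complex.norm_real, Real.norm_of_nonneg (by positivity)]
  have ht1 : ‖(z - a ^ 2 / (2 * (n:ℂ) ^ 2)) * ((H:ℂ) / (2 * (n:ℂ)))‖
      ≤ (M / (n:ℝ) ^ 4) * (1 / 2) := by
    rw [norm_mul, hnormHc]
    exact mul_le_mul hz (hT.trans (by norm_num)) hT0 (by positivity)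
  have ht2 : ‖a ^ 2 * ((H:ℂ) - (Real.log n : ℂ) - (γ:ℂ)) / (4 * (n:ℂ) ^ 3)‖
      ≤ ‖a‖ ^ 2 * (1 / n) / (4 * (n:ℝ) ^ 3) := by
    rw [norm_div, norm_mul, norm_pow, hnorm4n3]
    gcongr
    try exact hnormdiff
  have hE : ‖(1 - ∑ k ∈ Finset.Icc 1 (n-1), w k)
      - (1 - a ^ 2 * (Real.log n : ℂ) / (4 * (n : ℂ) ^ 3) - a ^ 2 * (γ : ℂ) / (4 * (n : ℂ) ^ 3))‖
      ≤ M / (2 * (n:ℝ) ^ 4) + ‖a‖ ^ 2 / (4 * (n:ℝ) ^ 4) := by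
    rw [hEeq, norm_neg]
    refine (norm_add_le _ _).trans ((add_le_add ht1 ht2).trans (le_of_eq ?_))
    field_simp
  -- combine
  have hquad : 6 * S ^ 2 ≤ (3 * K ^ 2 / 2) / (n:ℝ) ^ 4 := by
    have : S ^ 2 ≤ (K / (2 * (n:ℝ)^2)) ^ 2 := by nlinarith
    calc 6 * S ^ 2 ≤ 6 * (K / (2 * (n:ℝ)^2)) ^ 2 := by linarith
      _ = (3 * K ^ 2 / 2) / (n:ℝ) ^ 4 := by field_simp; ring
  simp only [div_eq_mul_inv]
  calc ‖(∏ k ∈ Finset.Icc 1 (n - 1), (1 + z * (4 * (k : ℂ) * ((n : ℂ) - (k : ℂ)))⁻¹)⁻¹)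
          - (1 - a ^ 2 * (Real.log n : ℂ) * (4 * (n : ℂ) ^ 3)⁻¹
              - a ^ 2 * (γ : ℂ) * (4 * (n : ℂ) ^ 3)⁻¹)‖
      ≤ ‖(∏ k ∈ Finset.Icc 1 (n - 1), (1 + w k)⁻¹) - (1 - ∑ k ∈ Finset.Icc 1 (n-1), w k)‖
        + ‖(1 - ∑ k ∈ Finset.Icc 1 (n-1), w k)
          - (1 - a ^ 2 * (Real.log n : ℂ) / (4 * (n : ℂ) ^ 3)
              - a ^ 2 * (γ : ℂ) / (4 * (n : ℂ) ^ 3))‖ := by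
        rw [hwdef]
        simp only [div_eq_mul_inv]
        exact norm_sub_le_norm_sub_add_norm_sub _ _ _
    _ ≤ 6 * S ^ 2 + (M / (2 * (n:ℝ) ^ 4) + ‖a‖ ^ 2 / (4 * (n:ℝ) ^ 4)) := add_le_add hmain hE
    _ ≤ (3 * K ^ 2 / 2) / (n:ℝ) ^ 4 + (M / (2 * (n:ℝ) ^ 4) + ‖a‖ ^ 2 / (4 * (n:ℝ) ^ 4)) := by
        linarith
    _ = (3 * K ^ 2 / 2 + M / 2 + ‖a‖ ^ 2 / 4) / (n:ℝ) ^ 4 := by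
        field_simp
        ring
    _ ≤ (3 * K ^ 2 / 2 + M / 2 + ‖a‖ ^ 2 / 4 + 1) / (n:ℝ) ^ 4 :=
        (div_le_div_iff_of_pos_right (by positivity)).mpr (by linarith)
end
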